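/- arXiv:2006.13632 — 8 statements merged into one kernel-verified Lean document; each statement's English description precedes it below -/
import Mathlib

section
/- For every integer n ≥ 2, the (n−1)-matching complex M_{n−1}(K_{n,n}) of the complete bipartite graph K_{n,n} is homotopy equivalent to a sphere of dimension (n−1)² − 1. -/
/-- Vertices of complete bipartite graphs: `Sum.inl i` is the vertex `a_i`,
`Sum.inr j` is the vertex `b_j`. -/
abbrev BipV : Type := ℕ ⊕ ℕ

/-- Degree of vertex `v` in the edge set `H`. -/
def degB (H : Finset (Sym2 BipV)) (v : BipV) : ℕ := (H.filter (fun e => v ∈ e)).card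

/-- Edge set of the complete bipartite graph `K_{m,n}`:
all edges `{a_i, b_j}` with `i ∈ [m]`, `j ∈ [n]`. -/
def EKbip (m n : ℕ) : Finset (Sym2 BipV) :=
  ((Finset.Icc 1 m) ×ˢ (Finset.Icc 1 n)).image (fun p => s(Sum.inl p.1, Sum.inr p.2))

/-- The `r`-matching complex of `K_{m,n}`, as its set of faces: the subsets `H` of the
edge set of `K_{m,n}` such that every vertex has degree at most `r` in `H`. -/
def MBip (m n r : ℕ) : Set (Finset (Sym2 BipV)) :=
  {H | H ⊆ EKbip m n ∧ ∀ v, degB H v ≤ r}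

/-- Geometric realization of an abstract simplicial complex `K` (given as its set of
faces, finite subsets of the vertex type `V`): the space of convex-combination
functions supported on a face of `K`, as a subspace of `V → ℝ`. -/
def realization {V : Type*} (K : Set (Finset V)) : Set (V → ℝ) :=
  {f | (∀ v, 0 ≤ f v) ∧ ∃ σ ∈ K, (∀ v, f v ≠ 0 → v ∈ σ) ∧ ∑ v ∈ σ, f v = 1}

namespace MXP
open Finset

noncomputable section

variable {m : ℕ}

/-- square matrices -/
abbrev Mat (m : ℕ) := Fin (m+1) → Fin (m+1) → ℝ

/-- the cone: nonneg with a zero in each row and column -/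
def CC (m : ℕ) : Set (Mat m) :=
  {x | (∀ i j, 0 ≤ x i j) ∧ (∀ i, ∃ j, x i j = 0) ∧ (∀ j, ∃ i, x i j = 0)}

def Cs (m : ℕ) : Set (Mat m) := {x | x ∈ CC m ∧ x ≠ 0}

abbrev Eu (m : ℕ) := EuclideanSpace ℝ (Fin (m^2))

def Es (m : ℕ) : Set (Eu m) := {w | w ≠ 0}

def ep2 (m : ℕ) : Fin (m^2) ≃ Fin m × Fin m := (finCongr (by ring)).trans finProdFinEquiv.symm

/-- gauge projection, kills matrices of the form rᵢ + cⱼ -/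
def piM (x : Mat m) : Eu m := WithLp.toLp 2 fun k =>
  x ((ep2 m k).1.castSucc) ((ep2 m k).2.castSucc) - x ((ep2 m k).1.castSucc) (Fin.last m)
    - x (Fin.last m) ((ep2 m k).2.castSucc) + x (Fin.last m) (Fin.last m)

/-- section of the gauge projection -/
def iotaM (w : Eu m) : Mat m := fun i j =>
  if h : (i:ℕ) < m ∧ (j:ℕ) < m then w ((ep2 m).symm (⟨i, h.1⟩, ⟨j, h.2⟩)) else 0

def rho (x : Mat m) (i : Fin (m+1)) : ℝ := univ.inf' univ_nonempty (x i)

def gam (x : Mat m) (j : Fin (m+1)) : ℝ := univ.inf' univ_nonempty (fun i => x i j - rho x i)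

/-- Hungarian reduction: retraction of everything onto the cone `CC` -/
def RR (x : Mat m) : Mat m := fun i j => x i j - rho x i - gam x j

def T (x : Mat m) : ℝ := ∑ i, ∑ j, x i j

lemma rho_le (x : Mat m) (i j : Fin (m+1)) : rho x i ≤ x i j := inf'_le _ (mem_univ j)

lemma exists_rho (x : Mat m) (i : Fin (m+1)) : ∃ j, x i j = rho x i := by
  obtain ⟨j, -, hj⟩ := exists_mem_eq_inf' (univ_nonempty) (x i)
  exact ⟨j, hj.symm⟩

lemma gam_le (x : Mat m) (i j : Fin (m+1)) : gam x j ≤ x i j - rho x i := inf'_le _ (mem_univ i)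

lemma exists_gam (x : Mat m) (j : Fin (m+1)) : ∃ i, x i j - rho x i = gam x j := by
  obtain ⟨i, -, hi⟩ := exists_mem_eq_inf' (univ_nonempty) (fun i => x i j - rho x i)
  exact ⟨i, hi.symm⟩

lemma gam_nonneg (x : Mat m) (j : Fin (m+1)) : 0 ≤ gam x j := by
  apply le_inf'
  intro i _
  have := rho_le x i
  obtain ⟨j', hj'⟩ := exists_rho x i
  linarith [rho_le x i j, sub_nonneg.mpr (rho_le x i j)]

lemma RR_mem_CC (x : Mat m) : RR x ∈ CC m := by
  refine ⟨fun i j => ?_, fun i => ?_, fun j => ?_⟩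
  · have := gam_le x i j
    simp only [RR]; linarith
  · obtain ⟨j, hj⟩ := exists_rho x i
    refine ⟨j, ?_⟩
    have h1 : gam x j ≤ x i j - rho x i := gam_le x i j
    have h2 : 0 ≤ gam x j := gam_nonneg x j
    simp only [RR]; linarith [hj]
  · obtain ⟨i, hi⟩ := exists_gam x j
    exact ⟨i, by simp only [RR]; linarith⟩

lemma rho_eq_zero {x : Mat m} (hx : x ∈ CC m) (i : Fin (m+1)) : rho x i = 0 := by
  obtain ⟨j0, hj0⟩ := hx.2.1 i
  refine le_antisymm (hj0 ▸ rho_le x i j0) ?_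
  exact le_inf' _ _ (fun j _ => hx.1 i j)

lemma RR_eq_self {x : Mat m} (hx : x ∈ CC m) : RR x = x := by
  have hrho : ∀ i, rho x i = 0 := rho_eq_zero hx
  have hgam : ∀ j, gam x j = 0 := by
    intro j
    obtain ⟨i0, hi0⟩ := hx.2.2 j
    refine le_antisymm ?_ (gam_nonneg x j)
    calc gam x j ≤ x i0 j - rho x i0 := gam_le x i0 j
    _ = 0 := by rw [hrho, hi0]; ring
  funext i j
  simp only [RR, hrho, hgam]; ring

lemma piM_RR (x : Mat m) : piM (RR x) = piM x := by
  ext k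
  simp only [piM, RR, PiLp.toLp_apply]; ring

lemma piM_iota (w : Eu m) : piM (iotaM w) = w := by
  ext k
  simp only [piM, iotaM, PiLp.toLp_apply]
  have h1 : ((ep2 m k).1.castSucc : ℕ) < m := by simp [Fin.is_lt]
  have h2 : ((ep2 m k).2.castSucc : ℕ) < m := by simp [Fin.is_lt]
  have h3 : ¬ ((Fin.last m : ℕ) < m) := by simp
  rw [dif_pos ⟨h1, h2⟩, dif_neg (by tauto), dif_neg (by tauto), dif_neg (by tauto)]
  have he : ((⟨((ep2 m k).1.castSucc : ℕ), h1⟩ : Fin m), (⟨((ep2 m k).2.castSucc : ℕ), h2⟩ : Fin m)) = ep2 m k := by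
    ext <;> simp
  rw [he, Equiv.symm_apply_apply]
  ring

lemma piM_apply_pair (x : Mat m) (a b : Fin m) :
    piM x ((ep2 m).symm (a, b)) =
      x a.castSucc b.castSucc - x a.castSucc (Fin.last m)
        - x (Fin.last m) b.castSucc + x (Fin.last m) (Fin.last m) := by
  simp [piM, Equiv.apply_symm_apply]

/-- the key geometric fact: the cone meets the gauge subspace only at 0 -/
lemma ker_piM {x : Mat m} (hx : x ∈ CC m) (h : piM x = 0) : x = 0 := by
  obtain ⟨hpos, hrow, hcol⟩ := hx
  set L := Fin.last m with hL
  -- from `piM x = 0` : the "rank-one gauge" identity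
  have key : ∀ i j : Fin (m+1), x i j = x i L + x L j - x L L := by
    intro i j
    by_cases hi : i = L
    · subst hi; ring
    by_cases hj : j = L
    · subst hj; ring
    obtain ⟨a, ha⟩ := Fin.exists_castSucc_eq.mpr hi
    obtain ⟨b, hb⟩ := Fin.exists_castSucc_eq.mpr hj
    have : piM x ((ep2 m).symm (a, b)) = (0 : Eu m) ((ep2 m).symm (a, b)) := by rw [h]
    rw [piM_apply_pair] at this
    have h0 : (0 : Eu m) ((ep2 m).symm (a,b)) = 0 := rfl
    rw [h0] at this
    rw [← ha, ← hb]
    linarith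
  -- minimum of last row
  have hcm : ∀ i : Fin (m+1), x i L = x L L - rho x L := by
    intro i
    obtain ⟨js, hjs⟩ := exists_rho x L
    obtain ⟨j0, hj0⟩ := hrow i
    have e1 : 0 ≤ x i js := hpos i js
    have e2 := key i js
    have e3 := key i j0
    have e4 : rho x L ≤ x L j0 := rho_le x L j0
    have : x i L ≥ x L L - rho x L := by rw [e2] at e1; rw [← hjs]; linarith
    have h2 : x i L ≤ x L L - rho x L := by
      rw [hj0] at e3; linarith
    linarith
  have hcm0 : rho x L = 0 := by
    have := hcm L; linarith
  have hrowL : ∀ j, x L j = 0 := by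
    intro j
    obtain ⟨i0, hi0⟩ := hcol j
    have := key i0 j
    rw [hi0, hcm i0, hcm0] at this
    linarith
  have hLL : x L L = 0 := hrowL L
  funext i j
  have := key i j
  rw [hrowL j, hcm i, hcm0, hLL] at this
  simpa using this


/-! ### continuity -/

lemma cont_entry (i j : Fin (m+1)) : Continuous fun x : Mat m => x i j :=
  (continuous_apply j).comp (continuous_apply i)

lemma cont_rho (i : Fin (m+1)) : Continuous fun x : Mat m => rho x i :=
  Continuous.finset_inf'_apply univ_nonempty (fun j _ => cont_entry i j)

lemma cont_gam (j : Fin (m+1)) : Continuous fun x : Mat m => gam x j :=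
  Continuous.finset_inf'_apply univ_nonempty (fun i _ => (cont_entry i j).sub (cont_rho i))

lemma cont_RR : Continuous (RR : Mat m → Mat m) := by
  apply continuous_pi; intro i; apply continuous_pi; intro j
  exact ((cont_entry i j).sub (cont_rho i)).sub (cont_gam j)

lemma cont_piM : Continuous (piM : Mat m → Eu m) := by
  have h : Continuous fun (x : Mat m) (k : Fin (m^2)) =>
      x ((ep2 m k).1.castSucc) ((ep2 m k).2.castSucc) - x ((ep2 m k).1.castSucc) (Fin.last m)
        - x (Fin.last m) ((ep2 m k).2.castSucc) + x (Fin.last m) (Fin.last m) := by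
    apply continuous_pi; intro k
    exact (((cont_entry _ _).sub (cont_entry _ _)).sub (cont_entry _ _)).add (cont_entry _ _)
  exact (PiLp.continuous_toLp (p := 2) (β := fun _ : Fin (m^2) => ℝ)).comp h

lemma cont_iotaM : Continuous (iotaM : Eu m → Mat m) := by
  apply continuous_pi; intro i; apply continuous_pi; intro j
  unfold iotaM
  by_cases h : (i:ℕ) < m ∧ (j:ℕ) < m
  · simp only [dif_pos h]
    exact (EuclideanSpace.proj ((ep2 m).symm (⟨i, h.1⟩, ⟨j, h.2⟩))).continuous
  · simp only [dif_neg h]; exact continuous_const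

lemma cont_T : Continuous (T : Mat m → ℝ) := by
  unfold T
  exact continuous_finset_sum _ fun i _ => continuous_finset_sum _ fun j _ => cont_entry i j

/-! ### further algebraic lemmas -/

lemma T_pos {x : Mat m} (hpos : ∀ i j, 0 ≤ x i j) (hx : x ≠ 0) : 0 < T x := by
  obtain ⟨i, hi⟩ := Function.ne_iff.mp hx
  obtain ⟨j, hj⟩ := Function.ne_iff.mp hi
  have hj' : (0:ℝ) < x i j := lt_of_le_of_ne (hpos i j) (Ne.symm hj)
  refine Finset.sum_pos' (fun i _ => Finset.sum_nonneg fun j _ => hpos i j) ⟨i, mem_univ i, ?_⟩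
  exact Finset.sum_pos' (fun j _ => hpos i j) ⟨j, mem_univ j, hj'⟩

lemma smul_mem_CC {x : Mat m} (hx : x ∈ CC m) {c : ℝ} (hc : 0 ≤ c) : c • x ∈ CC m := by
  obtain ⟨hpos, hrow, hcol⟩ := hx
  refine ⟨fun i j => mul_nonneg hc (hpos i j), fun i => ?_, fun j => ?_⟩
  · obtain ⟨j, hj⟩ := hrow i; exact ⟨j, by simp [hj]⟩
  · obtain ⟨i, hi⟩ := hcol j; exact ⟨i, by simp [hi]⟩

lemma piM_segment (a b : ℝ) (x y : Mat m) (k : Fin (m^2)) :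
    piM (a • x + b • y) k = a * piM x k + b * piM y k := by
  simp only [piM, PiLp.toLp_apply, Pi.add_apply, Pi.smul_apply, smul_eq_mul]
  ring

lemma piM_ne_zero {x : Mat m} (hx : x ∈ CC m) (hx0 : x ≠ 0) : piM x ≠ 0 :=
  fun h => hx0 (ker_piM hx h)

lemma RR_ne_zero {z : Mat m} (hz : piM z ≠ 0) : RR z ≠ 0 := by
  intro h
  apply hz
  rw [← piM_RR z, h]
  ext k
  simp [piM]

/-! ### homotopy equivalence `Cs m ≃ₕ Es m` -/

def Fmap (m : ℕ) : C(Cs m, Es m) :=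
  ⟨fun x => ⟨piM x.1, piM_ne_zero x.2.1 x.2.2⟩,
   Continuous.subtype_mk (cont_piM.comp continuous_subtype_val) _⟩

lemma Gmem (w : Es m) : RR (iotaM w.1) ∈ Cs m := by
  refine ⟨RR_mem_CC _, RR_ne_zero ?_⟩
  rw [piM_iota]
  exact w.2

def Gmap (m : ℕ) : C(Es m, Cs m) :=
  ⟨fun w => ⟨RR (iotaM w.1), Gmem w⟩,
   Continuous.subtype_mk ((cont_RR.comp cont_iotaM).comp continuous_subtype_val) _⟩

lemma seg_mem_Cs (a b : ℝ) (hab : a + b = 1) (x : Cs m) :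
    RR (a • x.1 + b • iotaM (piM x.1)) ∈ Cs m := by
  refine ⟨RR_mem_CC _, RR_ne_zero ?_⟩
  intro h
  apply piM_ne_zero x.2.1 x.2.2
  ext k
  have h1 := piM_segment a b x.1 (iotaM (piM x.1)) k
  rw [piM_iota] at h1
  have h2 : piM (a • x.1 + b • iotaM (piM x.1)) k = 0 := by
    rw [h]; rfl
  have h0 : (0 : Eu m) k = 0 := rfl
  rw [h0]
  have h3 : a * piM x.1 k + b * piM x.1 k = piM x.1 k := by
    rw [← add_mul, hab, one_mul]
  linarith

def he1 (m : ℕ) : ContinuousMap.HomotopyEquiv (Cs m) (Es m) := by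
  refine ⟨Fmap m, Gmap m, ⟨?_⟩, ?_⟩
  · -- homotopy from G ∘ F to id
    refine { toFun := fun p => ⟨RR ((p.1:ℝ) • p.2.1 + (1 - (p.1:ℝ)) • iotaM (piM p.2.1)),
               seg_mem_Cs _ _ (by ring) _⟩,
             continuous_toFun := ?_, map_zero_left := ?_, map_one_left := ?_ }
    · apply Continuous.subtype_mk
      apply cont_RR.comp
      have hc : Continuous fun p : unitInterval × Cs m => (p.1 : ℝ) :=
        continuous_subtype_val.comp continuous_fst
      have hx : Continuous fun p : unitInterval × Cs m => p.2.1 :=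
        continuous_subtype_val.comp continuous_snd
      exact (hc.smul hx).add ((continuous_const.sub hc).smul ((cont_iotaM.comp cont_piM).comp hx))
    · intro x
      apply Subtype.ext
      show RR (((0:ℝ)) • x.1 + (1 - (0:ℝ)) • iotaM (piM x.1)) = _
      rw [zero_smul, zero_add, show ((1:ℝ) - 0) = 1 by ring, one_smul]
      rfl
    · intro x
      apply Subtype.ext
      show RR (((1:ℝ)) • x.1 + (1 - (1:ℝ)) • iotaM (piM x.1)) = _
      rw [one_smul, show ((1:ℝ) - 1) = 0 by ring, zero_smul, add_zero]
      exact RR_eq_self x.2.1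
  · -- F ∘ G = id
    have h : (Fmap m).comp (Gmap m) = ContinuousMap.id (Es m) := by
      apply ContinuousMap.ext; intro w
      apply Subtype.ext
      show piM (RR (iotaM w.1)) = w.1
      rw [piM_RR, piM_iota]
    rw [h]

/-! ### homotopy equivalence `Es m ≃ₕ sphere` -/

lemma norm_pos_of_Es (w : Es m) : (0:ℝ) < ‖w.1‖ := norm_pos_iff.mpr w.2

lemma rmem (w : Es m) : ‖w.1‖⁻¹ • w.1 ∈ Metric.sphere (0 : Eu m) 1 := by
  rw [mem_sphere_zero_iff_norm, norm_smul, norm_inv, norm_norm]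
  exact inv_mul_cancel₀ (ne_of_gt (norm_pos_of_Es w))

lemma sphere_ne_zero (z : Metric.sphere (0 : Eu m) 1) : (z : Eu m) ≠ 0 := by
  intro h
  have h2 := mem_sphere_zero_iff_norm.mp z.2
  rw [h] at h2
  simp at h2

lemma sph_scalar_pos {s : ℝ} (hs : 0 < s) {a b : ℝ} (ha : 0 ≤ a) (hb : 0 ≤ b)
    (hab : a + b = 1) : 0 < a + b * s⁻¹ := by
  rcases eq_or_lt_of_le ha with h | h
  · have hb1 : b = 1 := by linarith
    have : 0 < b * s⁻¹ := by rw [hb1, one_mul]; exact inv_pos.mpr hs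
    linarith
  · have : 0 ≤ b * s⁻¹ := mul_nonneg hb (le_of_lt (inv_pos.mpr hs))
    linarith

def normMap (m : ℕ) : C(Es m, Metric.sphere (0 : Eu m) 1) :=
  ⟨fun w => ⟨‖w.1‖⁻¹ • w.1, rmem w⟩,
   Continuous.subtype_mk
     ((continuous_subtype_val.norm.inv₀ (fun w => ne_of_gt (norm_pos_of_Es w))).smul
       continuous_subtype_val) _⟩

def inclMap (m : ℕ) : C(Metric.sphere (0 : Eu m) 1, Es m) :=
  ⟨fun z => ⟨z.1, sphere_ne_zero z⟩, Continuous.subtype_mk continuous_subtype_val _⟩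

def he2 (m : ℕ) : ContinuousMap.HomotopyEquiv (Es m) (Metric.sphere (0 : Eu m) 1) := by
  refine ⟨normMap m, inclMap m, ⟨?_⟩, ?_⟩
  · -- homotopy from incl ∘ norm to id on Es
    refine { toFun := fun p =>
               ⟨((p.1:ℝ) + (1 - (p.1:ℝ)) * ‖p.2.1‖⁻¹) • p.2.1,
                smul_ne_zero (ne_of_gt (sph_scalar_pos (norm_pos_of_Es p.2) p.1.2.1
                  (by linarith [p.1.2.2]) (by ring))) p.2.2⟩,
             continuous_toFun := ?_, map_zero_left := ?_, map_one_left := ?_ }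
    · have hc : Continuous fun p : unitInterval × Es m => (p.1 : ℝ) :=
        continuous_subtype_val.comp continuous_fst
      have hx : Continuous fun p : unitInterval × Es m => p.2.1 :=
        continuous_subtype_val.comp continuous_snd
      exact Continuous.subtype_mk
        ((hc.add ((continuous_const.sub hc).mul (hx.norm.inv₀ fun p =>
          ne_of_gt (norm_pos_of_Es p.2)))).smul hx) _
    · intro x
      apply Subtype.ext
      show (((0:ℝ)) + (1 - (0:ℝ)) * ‖x.1‖⁻¹) • x.1 = ‖x.1‖⁻¹ • x.1
      norm_num
    · intro x
      apply Subtype.ext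
      show (((1:ℝ)) + (1 - (1:ℝ)) * ‖x.1‖⁻¹) • x.1 = x.1
      norm_num
  · -- norm ∘ incl = id on sphere
    have h : (normMap m).comp (inclMap m) = ContinuousMap.id _ := by
      apply ContinuousMap.ext; intro z
      apply Subtype.ext
      show ‖(z : Eu m)‖⁻¹ • (z : Eu m) = (z : Eu m)
      rw [mem_sphere_zero_iff_norm.mp z.2]
      norm_num
    rw [h]


/-! ### the matching complex and the cone -/

def edge (a b : Fin (m+1)) : Sym2 BipV := s(Sum.inl ((a:ℕ)+1), Sum.inr ((b:ℕ)+1))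

lemma edge_inj {a b c d : Fin (m+1)} : edge a b = edge c d ↔ a = c ∧ b = d := by
  unfold edge
  rw [Sym2.eq_iff]
  constructor
  · rintro (⟨h1, h2⟩ | ⟨h1, h2⟩)
    · exact ⟨Fin.ext (by injection h1 with h; omega), Fin.ext (by injection h2 with h; omega)⟩
    · exact absurd h1 (by simp)
  · rintro ⟨rfl, rfl⟩
    left; exact ⟨rfl, rfl⟩

lemma inl_mem_edge {a b : Fin (m+1)} : (Sum.inl ((a:ℕ)+1) : BipV) ∈ edge a b := by
  unfold edge; rw [Sym2.mem_iff]; left; rfl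

lemma inr_mem_edge {a b : Fin (m+1)} : (Sum.inr ((b:ℕ)+1) : BipV) ∈ edge a b := by
  unfold edge; rw [Sym2.mem_iff]; right; rfl

lemma inl_mem_edge_iff {c : ℕ} {a b : Fin (m+1)} :
    (Sum.inl c : BipV) ∈ edge a b ↔ c = (a:ℕ)+1 := by
  unfold edge; rw [Sym2.mem_iff]; simp

lemma inr_mem_edge_iff {c : ℕ} {a b : Fin (m+1)} :
    (Sum.inr c : BipV) ∈ edge a b ↔ c = (b:ℕ)+1 := by
  unfold edge; rw [Sym2.mem_iff]; simp

def Phi (f : Sym2 BipV → ℝ) : Mat m := fun i j => f (edge i j)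

def Psi (y : Mat m) : Sym2 BipV → ℝ := fun e =>
  ∑ p : Fin (m+1) × Fin (m+1), if e = edge p.1 p.2 then y p.1 p.2 else 0

lemma Psi_edge (y : Mat m) (a b : Fin (m+1)) : Psi y (edge a b) = y a b := by
  unfold Psi
  rw [Finset.sum_eq_single_of_mem (a, b) (mem_univ _)]
  · rw [if_pos rfl]
  · intro p _ hp
    rw [if_neg]
    intro h
    obtain ⟨h1, h2⟩ := edge_inj.mp h
    exact hp (Prod.ext h1.symm h2.symm)

lemma mem_EKbip_iff {e : Sym2 BipV} :
    e ∈ EKbip (m+1) (m+1) ↔ ∃ a b : Fin (m+1), e = edge a b := by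
  unfold EKbip edge
  rw [Finset.mem_image]
  constructor
  · rintro ⟨p, hp, rfl⟩
    rw [Finset.mem_product, Finset.mem_Icc, Finset.mem_Icc] at hp
    obtain ⟨⟨h1, h2⟩, h3, h4⟩ := hp
    refine ⟨⟨p.1 - 1, by omega⟩, ⟨p.2 - 1, by omega⟩, ?_⟩
    have e1 : ((⟨p.1 - 1, by omega⟩ : Fin (m+1)) : ℕ) + 1 = p.1 := by simp; omega
    have e2 : ((⟨p.2 - 1, by omega⟩ : Fin (m+1)) : ℕ) + 1 = p.2 := by simp; omega
    rw [e1, e2]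
  · rintro ⟨a, b, rfl⟩
    refine ⟨((a:ℕ)+1, (b:ℕ)+1), ?_, rfl⟩
    rw [Finset.mem_product, Finset.mem_Icc, Finset.mem_Icc]
    have := a.isLt
    have := b.isLt
    omega

lemma Psi_not_mem {y : Mat m} {e : Sym2 BipV} (h : e ∉ EKbip (m+1) (m+1)) : Psi y e = 0 := by
  apply Finset.sum_eq_zero
  intro p _
  rw [if_neg]
  intro he
  exact h (mem_EKbip_iff.mpr ⟨p.1, p.2, he⟩)

lemma Phi_Psi (y : Mat m) : Phi (Psi y) = y :=
  funext fun i => funext fun j => Psi_edge y i j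

lemma EKbip_eq :
    EKbip (m+1) (m+1) = Finset.image (fun p : Fin (m+1) × Fin (m+1) => edge p.1 p.2) univ := by
  ext e
  rw [mem_EKbip_iff, Finset.mem_image]
  constructor
  · rintro ⟨a, b, rfl⟩; exact ⟨(a, b), mem_univ _, rfl⟩
  · rintro ⟨p, -, rfl⟩; exact ⟨p.1, p.2, rfl⟩

lemma sum_EKbip (g : Sym2 BipV → ℝ) :
    ∑ e ∈ EKbip (m+1) (m+1), g e = ∑ p : Fin (m+1) × Fin (m+1), g (edge p.1 p.2) := by
  rw [EKbip_eq, Finset.sum_image]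
  intro p _ q _ h
  obtain ⟨h1, h2⟩ := edge_inj.mp h
  exact Prod.ext h1 h2

lemma T_eq_sum_pairs (y : Mat m) : T y = ∑ p : Fin (m+1) × Fin (m+1), y p.1 p.2 := by
  rw [T]
  exact (Fintype.sum_prod_type fun p : Fin (m+1) × Fin (m+1) => y p.1 p.2).symm

lemma Phi_mem_Cs {f : Sym2 BipV → ℝ} (hf : f ∈ realization (MBip (m+1) (m+1) m)) :
    Phi f ∈ Cs m := by
  obtain ⟨hpos, σ, ⟨hσE, hdeg⟩, hsupp, hsum⟩ := hf
  refine ⟨⟨fun i j => hpos _, fun i => ?_, fun j => ?_⟩, ?_⟩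
  · -- row zero
    by_contra hno
    push_neg at hno
    have hmem : ∀ j : Fin (m+1), edge i j ∈ σ := fun j => hsupp _ (hno j)
    have hsub : Finset.image (fun j : Fin (m+1) => edge i j) univ ⊆
        σ.filter (fun e => (Sum.inl ((i:ℕ)+1) : BipV) ∈ e) := by
      intro e he
      rw [Finset.mem_image] at he
      obtain ⟨j, -, rfl⟩ := he
      rw [Finset.mem_filter]
      exact ⟨hmem j, inl_mem_edge⟩
    have hcard : m + 1 ≤ degB σ (Sum.inl ((i:ℕ)+1)) := by
      have h1 : (Finset.image (fun j : Fin (m+1) => edge i j) univ).card = m + 1 := by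
        rw [Finset.card_image_of_injective _ (fun j j' h => (edge_inj.mp h).2), card_univ,
          Fintype.card_fin]
      have h2 := Finset.card_le_card hsub
      rw [degB]
      omega
    linarith [hdeg (Sum.inl ((i:ℕ)+1))]
  · -- column zero
    by_contra hno
    push_neg at hno
    have hmem : ∀ i : Fin (m+1), edge i j ∈ σ := fun i => hsupp _ (hno i)
    have hsub : Finset.image (fun i : Fin (m+1) => edge i j) univ ⊆
        σ.filter (fun e => (Sum.inr ((j:ℕ)+1) : BipV) ∈ e) := by
      intro e he
      rw [Finset.mem_image] at he
      obtain ⟨i, -, rfl⟩ := he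
      rw [Finset.mem_filter]
      exact ⟨hmem i, inr_mem_edge⟩
    have hcard : m + 1 ≤ degB σ (Sum.inr ((j:ℕ)+1)) := by
      have h1 : (Finset.image (fun i : Fin (m+1) => edge i j) univ).card = m + 1 := by
        rw [Finset.card_image_of_injective _ (fun i i' h => (edge_inj.mp h).1), card_univ,
          Fintype.card_fin]
      have h2 := Finset.card_le_card hsub
      rw [degB]
      omega
    linarith [hdeg (Sum.inr ((j:ℕ)+1))]
  · -- nonzero
    intro h0
    have hz : ∀ v ∈ σ, f v = 0 := by
      intro v hv
      obtain ⟨a, b, rfl⟩ := mem_EKbip_iff.mp (hσE hv)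
      have : Phi f a b = 0 := by rw [h0]; rfl
      exact this
    rw [Finset.sum_eq_zero hz] at hsum
    exact zero_ne_one hsum

lemma deg_filter_le {y : Mat m} (hrow : ∀ i, ∃ j, y i j = 0) (hcol : ∀ j, ∃ i, y i j = 0)
    (v : BipV) : degB ((EKbip (m+1) (m+1)).filter (fun e => Psi y e ≠ 0)) v ≤ m := by
  set σ := (EKbip (m+1) (m+1)).filter (fun e => Psi y e ≠ 0) with hσ
  rw [degB]
  match v with
  | Sum.inl a =>
    by_cases ha : ∃ i₀ : Fin (m+1), a = (i₀:ℕ)+1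
    · obtain ⟨i₀, rfl⟩ := ha
      obtain ⟨j₀, hj₀⟩ := hrow i₀
      have hsub : σ.filter (fun e => (Sum.inl ((i₀:ℕ)+1) : BipV) ∈ e) ⊆
          (univ.erase j₀).image (fun j => edge i₀ j) := by
        intro e he
        rw [Finset.mem_filter] at he
        obtain ⟨heσ, hemem⟩ := he
        rw [hσ, Finset.mem_filter] at heσ
        obtain ⟨p1, p2, rfl⟩ := mem_EKbip_iff.mp heσ.1
        have hP : Psi y (edge p1 p2) ≠ 0 := heσ.2
        rw [Psi_edge] at hP
        have hp1 : p1 = i₀ := by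
          have := inl_mem_edge_iff.mp hemem
          exact Fin.ext (by omega)
        subst hp1
        have hp2 : p2 ≠ j₀ := fun h => hP (by rw [h, hj₀])
        exact Finset.mem_image.mpr ⟨p2, Finset.mem_erase.mpr ⟨hp2, mem_univ _⟩, rfl⟩
      calc (σ.filter (fun e => (Sum.inl ((i₀:ℕ)+1) : BipV) ∈ e)).card
          ≤ ((univ.erase j₀).image (fun j => edge i₀ j)).card := Finset.card_le_card hsub
        _ ≤ (univ.erase j₀).card := Finset.card_image_le
        _ = m := by
              rw [Finset.card_erase_of_mem (mem_univ _), card_univ, Fintype.card_fin]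
              omega
    · have hempty : σ.filter (fun e => (Sum.inl a : BipV) ∈ e) = ∅ := by
        rw [Finset.filter_eq_empty_iff]
        intro e he
        rw [hσ, Finset.mem_filter] at he
        obtain ⟨p1, p2, rfl⟩ := mem_EKbip_iff.mp he.1
        intro hmem
        exact ha ⟨p1, inl_mem_edge_iff.mp hmem⟩
      rw [hempty]
      simp
  | Sum.inr b =>
    by_cases hb : ∃ j₀ : Fin (m+1), b = (j₀:ℕ)+1
    · obtain ⟨j₀, rfl⟩ := hb
      obtain ⟨i₀, hi₀⟩ := hcol j₀
      have hsub : σ.filter (fun e => (Sum.inr ((j₀:ℕ)+1) : BipV) ∈ e) ⊆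
          (univ.erase i₀).image (fun i => edge i j₀) := by
        intro e he
        rw [Finset.mem_filter] at he
        obtain ⟨heσ, hemem⟩ := he
        rw [hσ, Finset.mem_filter] at heσ
        obtain ⟨p1, p2, rfl⟩ := mem_EKbip_iff.mp heσ.1
        have hP : Psi y (edge p1 p2) ≠ 0 := heσ.2
        rw [Psi_edge] at hP
        have hp2 : p2 = j₀ := by
          have := inr_mem_edge_iff.mp hemem
          exact Fin.ext (by omega)
        subst hp2
        have hp1 : p1 ≠ i₀ := fun h => hP (by rw [h, hi₀])
        exact Finset.mem_image.mpr ⟨p1, Finset.mem_erase.mpr ⟨hp1, mem_univ _⟩, rfl⟩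
      calc (σ.filter (fun e => (Sum.inr ((j₀:ℕ)+1) : BipV) ∈ e)).card
          ≤ ((univ.erase i₀).image (fun i => edge i j₀)).card := Finset.card_le_card hsub
        _ ≤ (univ.erase i₀).card := Finset.card_image_le
        _ = m := by
              rw [Finset.card_erase_of_mem (mem_univ _), card_univ, Fintype.card_fin]
              omega
    · have hempty : σ.filter (fun e => (Sum.inr b : BipV) ∈ e) = ∅ := by
        rw [Finset.filter_eq_empty_iff]
        intro e he
        rw [hσ, Finset.mem_filter] at he
        obtain ⟨p1, p2, rfl⟩ := mem_EKbip_iff.mp he.1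
        intro hmem
        exact hb ⟨p2, inr_mem_edge_iff.mp hmem⟩
      rw [hempty]
      simp

lemma Psi_mem_real {y : Mat m} (hy : y ∈ CC m) (hs : T y = 1) :
    Psi y ∈ realization (MBip (m+1) (m+1) m) := by
  refine ⟨?_, (EKbip (m+1) (m+1)).filter (fun e => Psi y e ≠ 0),
    ⟨Finset.filter_subset _ _, deg_filter_le hy.2.1 hy.2.2⟩, ?_, ?_⟩
  · intro v
    refine Finset.sum_nonneg fun p _ => ?_
    split_ifs with h
    exacts [hy.1 p.1 p.2, le_rfl]
  · intro v hv
    rw [Finset.mem_filter]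
    refine ⟨?_, hv⟩
    by_contra hE
    exact hv (Psi_not_mem hE)
  · rw [Finset.sum_filter_ne_zero, sum_EKbip]
    rw [← hs, T_eq_sum_pairs]
    exact Finset.sum_congr rfl fun p _ => Psi_edge y p.1 p.2

lemma T_smul (c : ℝ) (x : Mat m) : T (c • x) = c * T x := by
  unfold T
  simp [Finset.mul_sum]

lemma scaled_mem {x : Mat m} (hx : x ∈ Cs m) : (T x)⁻¹ • x ∈ CC m ∧ T ((T x)⁻¹ • x) = 1 := by
  have hT : 0 < T x := T_pos hx.1.1 hx.2
  exact ⟨smul_mem_CC hx.1 (le_of_lt (inv_pos.mpr hT)),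
    by rw [T_smul, inv_mul_cancel₀ (ne_of_gt hT)]⟩

/-! ### the continuous maps and homotopy equivalence -/

def alphaMap (m : ℕ) : C(realization (MBip (m+1) (m+1) m), Cs m) :=
  ⟨fun f => ⟨Phi f.1, Phi_mem_Cs f.2⟩,
   Continuous.subtype_mk (by
     apply continuous_pi; intro i; apply continuous_pi; intro j
     exact (continuous_apply (edge i j)).comp continuous_subtype_val) _⟩

def betaMap (m : ℕ) : C(Cs m, realization (MBip (m+1) (m+1) m)) :=
  ⟨fun x => ⟨Psi ((T x.1)⁻¹ • x.1), Psi_mem_real (scaled_mem x.2).1 (scaled_mem x.2).2⟩,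
   Continuous.subtype_mk (by
     apply continuous_pi; intro v
     apply continuous_finset_sum
     intro p _
     apply Continuous.if_const
     · have hval : Continuous fun x : Cs m => x.1 := continuous_subtype_val
       have hT : Continuous fun x : Cs m => (T x.1)⁻¹ :=
         (cont_T.comp hval).inv₀ fun x => ne_of_gt (T_pos x.2.1.1 x.2.2)
       exact hT.mul ((cont_entry p.1 p.2).comp hval)
     · exact continuous_const) _⟩

def he0 (m : ℕ) :
    ContinuousMap.HomotopyEquiv (realization (MBip (m+1) (m+1) m)) (Cs m) := by
  refine ⟨alphaMap m, betaMap m, ?_, ⟨?_⟩⟩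
  · -- β ∘ α = id
    have h : (betaMap m).comp (alphaMap m) = ContinuousMap.id _ := by
      apply ContinuousMap.ext; intro f
      apply Subtype.ext
      obtain ⟨hpos, σ, ⟨hσE, hdeg⟩, hsupp, hsum⟩ := f.2
      have hT1 : T (Phi (m := m) f.1) = 1 := by
        rw [T_eq_sum_pairs]
        have h1 : ∑ p : Fin (m+1) × Fin (m+1), Phi f.1 p.1 p.2
            = ∑ e ∈ EKbip (m+1) (m+1), f.1 e := (sum_EKbip f.1).symm
        rw [h1, ← Finset.sum_subset hσE (fun e _ he => by
          by_contra h
          exact he (hsupp e h))]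
        exact hsum
      show Psi ((T (Phi f.1))⁻¹ • Phi f.1) = f.1
      rw [hT1, inv_one, one_smul]
      funext e
      by_cases he : e ∈ EKbip (m+1) (m+1)
      · obtain ⟨a, b, rfl⟩ := mem_EKbip_iff.mp he
        rw [Psi_edge]
        rfl
      · rw [Psi_not_mem he]
        by_contra h
        exact he (hσE (hsupp e (Ne.symm h)))
    rw [h]
  · -- homotopy from α ∘ β to id on Cs
    refine { toFun := fun p =>
               ⟨((p.1:ℝ) + (1 - (p.1:ℝ)) * (T p.2.1)⁻¹) • p.2.1, ?_⟩,
             continuous_toFun := ?_, map_zero_left := ?_, map_one_left := ?_ }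
    · have hT : 0 < T p.2.1 := T_pos p.2.2.1.1 p.2.2.2
      have hc : 0 < (p.1:ℝ) + (1 - (p.1:ℝ)) * (T p.2.1)⁻¹ :=
        sph_scalar_pos hT p.1.2.1 (by linarith [p.1.2.2]) (by ring)
      exact ⟨smul_mem_CC p.2.2.1 (le_of_lt hc), smul_ne_zero (ne_of_gt hc) p.2.2.2⟩
    · have hc : Continuous fun p : unitInterval × Cs m => (p.1 : ℝ) :=
        continuous_subtype_val.comp continuous_fst
      have hx : Continuous fun p : unitInterval × Cs m => p.2.1 :=
        continuous_subtype_val.comp continuous_snd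
      have hT : Continuous fun p : unitInterval × Cs m => (T p.2.1)⁻¹ :=
        (cont_T.comp hx).inv₀ fun p => ne_of_gt (T_pos p.2.2.1.1 p.2.2.2)
      exact Continuous.subtype_mk
        ((hc.add ((continuous_const.sub hc).mul hT)).smul hx) _
    · intro x
      apply Subtype.ext
      show (((0:ℝ)) + (1 - (0:ℝ)) * (T x.1)⁻¹) • x.1 = Phi (Psi ((T x.1)⁻¹ • x.1))
      rw [Phi_Psi]
      norm_num
    · intro x
      apply Subtype.ext
      show (((1:ℝ)) + (1 - (1:ℝ)) * (T x.1)⁻¹) • x.1 = x.1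
      norm_num

end
end MXP

/-- For `n ≥ 2`, the `(n-1)`-matching complex of the complete bipartite graph `K_{n,n}`
is homotopy equivalent to a sphere of dimension `(n-1)² - 1` (the unit sphere of
`ℝ^{(n-1)²}`). -/
theorem matching_complex_complete_bipartite_homotopy_type (n : ℕ) (hn : 2 ≤ n) :
    Nonempty (ContinuousMap.HomotopyEquiv (realization (MBip n n (n - 1)))
      (Metric.sphere (0 : EuclideanSpace ℝ (Fin ((n - 1) ^ 2))) 1)) := by
  obtain ⟨m, rfl⟩ : ∃ m, n = m + 1 := ⟨n - 1, by omega⟩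
  exact ⟨((MXP.he0 m).trans (MXP.he1 m)).trans (MXP.he2 m)⟩
end

section
/- Let n ≥ 3. Define A_{1,1} = M_{n−2}(K_n) and, for i = 2,...,n, N_{1,i} = {G ∈ A_{1,i−1} : G ∖ {{1,i}} ∈ A_{1,i−1} and G ∪ {{1,i}} ∈ A_{1,i−1}} and A_{1,i} = A_{1,i−1} ∖ N_{1,i}. Then A_{1,n} = B_{1,2} ⊔ C_1, a disjoint union, where B_{1,2} = {G ∈ A_{1,1} : {1,2} ∉ G, deg_G(2) < n−2, deg_G(1) = n−2} and C_1 = {G ∈ A_{1,1} : for every i ∈ {2,...,n}, {1,i} ∉ G and deg_G(i) = n−2}. -/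
/-- Degree of vertex `v` in the edge set `H`. -/
def deg (H : Finset (Sym2 ℕ)) (v : ℕ) : ℕ := (H.filter (fun e => v ∈ e)).card

/-- Edge set of the complete graph `K_n` on vertex set `{1,…,n}`. -/
def EK (n : ℕ) : Finset (Sym2 ℕ) := (Finset.Icc 1 n).sym2.filter (fun e => ¬ e.IsDiag)

/-- The `r`-matching complex of `K_n`, as its set of faces. -/
def MK (n r : ℕ) : Set (Finset (Sym2 ℕ)) := {H | H ⊆ EK n ∧ ∀ v, deg H v ≤ r}

namespace StepOneAux

lemma deg_erase_of_notMem (H : Finset (Sym2 ℕ)) (e : Sym2 ℕ) (v : ℕ) (hv : v ∉ e) :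
    deg (H.erase e) v = deg H v := by
  unfold deg
  rw [Finset.filter_erase, Finset.erase_eq_of_notMem (by simp [hv])]

lemma deg_erase_add_one (H : Finset (Sym2 ℕ)) (e : Sym2 ℕ) (v : ℕ)
    (hv : v ∈ e) (he : e ∈ H) : deg (H.erase e) v + 1 = deg H v := by
  unfold deg
  rw [Finset.filter_erase]
  exact Finset.card_erase_add_one (by simp [Finset.mem_filter, he, hv])

lemma deg_insert_of_notMem (H : Finset (Sym2 ℕ)) (e : Sym2 ℕ) (v : ℕ) (hv : v ∉ e) :
    deg (insert e H) v = deg H v := by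
  unfold deg
  rw [Finset.filter_insert, if_neg hv]

lemma deg_insert_add (H : Finset (Sym2 ℕ)) (e : Sym2 ℕ) (v : ℕ)
    (hv : v ∈ e) (he : e ∉ H) : deg (insert e H) v = deg H v + 1 := by
  unfold deg
  rw [Finset.filter_insert, if_pos hv,
    Finset.card_insert_of_notMem (by simp [Finset.mem_filter, he])]

lemma deg_erase_le (H : Finset (Sym2 ℕ)) (e : Sym2 ℕ) (v : ℕ) :
    deg (H.erase e) v ≤ deg H v :=
  Finset.card_le_card (Finset.filter_subset_filter _ (Finset.erase_subset _ _))

lemma s_mem_EK {n k : ℕ} (hk : 2 ≤ k) (hkn : k ≤ n) : s(1, k) ∈ EK n := by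
  unfold EK
  simp only [Finset.mem_filter, Finset.mk_mem_sym2_iff, Finset.mem_Icc, Sym2.mk_isDiag_iff]
  omega

lemma one_mem_s (k : ℕ) : (1 : ℕ) ∈ s(1, k) := by simp

lemma two_notMem_s {k : ℕ} (hk : 3 ≤ k) : (2 : ℕ) ∉ s(1, k) := by
  rw [Sym2.mem_iff]; omega

lemma j_notMem_s {j k : ℕ} (hj : 2 ≤ j) (hjk : j ≠ k) : (j : ℕ) ∉ s(1, k) := by
  rw [Sym2.mem_iff]; omega

/-- If no edge `{1,j}` with `2 ≤ j < i` is in `G ⊆ E(K_n)`, then `deg G 1 ≤ n + 1 - i`. -/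
lemma deg_one_le {n : ℕ} {G : Finset (Sym2 ℕ)} (hG : G ⊆ EK n) (i : ℕ)
    (h : ∀ j, 2 ≤ j → j < i → s(1, j) ∉ G) : deg G 1 ≤ n + 1 - i := by
  have hsub : G.filter (fun e => (1 : ℕ) ∈ e) ⊆ (Finset.Icc i n).image (fun j => s(1, j)) := by
    intro e he
    rw [Finset.mem_filter] at he
    obtain ⟨heG, h1e⟩ := he
    have heEK := hG heG
    unfold EK at heEK
    rw [Finset.mem_filter] at heEK
    obtain ⟨hesym, hend⟩ := heEK
    induction e using Sym2.inductionOn with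
    | hf a b =>
      rw [Finset.mk_mem_sym2_iff, Finset.mem_Icc, Finset.mem_Icc] at hesym
      rw [Sym2.mk_isDiag_iff] at hend
      rw [Sym2.mem_iff] at h1e
      rw [Finset.mem_image]
      rcases h1e with rfl | rfl
      · refine ⟨b, ?_, rfl⟩
        rw [Finset.mem_Icc]
        have hb2 : 2 ≤ b := by omega
        have hb := h b hb2
        constructor
        · by_contra hbi
          exact hb (by omega) heG
        · omega
      · refine ⟨a, ?_, by rw [Sym2.eq_swap]⟩
        rw [Finset.mem_Icc]
        have ha2 : 2 ≤ a := by omega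
        have ha := h a ha2
        have heG' : s(1, a) ∈ G := by rwa [Sym2.eq_swap]
        constructor
        · by_contra hai
          exact ha (by omega) heG'
        · omega
  calc deg G 1 ≤ ((Finset.Icc i n).image (fun j => s(1, j))).card :=
        Finset.card_le_card hsub
    _ ≤ (Finset.Icc i n).card := Finset.card_image_le
    _ = n + 1 - i := Nat.card_Icc i n

lemma erase_mem_MK {n r : ℕ} {G : Finset (Sym2 ℕ)} (hG : G ∈ MK n r) (e : Sym2 ℕ) :
    G.erase e ∈ MK n r :=
  ⟨(Finset.erase_subset _ _).trans hG.1, fun v => (deg_erase_le _ _ _).trans (hG.2 v)⟩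

lemma insert_mem_MK_iff {n : ℕ} {G : Finset (Sym2 ℕ)} (hG : G ∈ MK n (n - 2)) {k : ℕ}
    (hk : 2 ≤ k) (hkn : k ≤ n) (hkG : s(1, k) ∉ G) :
    insert s(1, k) G ∈ MK n (n - 2) ↔ deg G 1 < n - 2 ∧ deg G k < n - 2 := by
  constructor
  · rintro ⟨-, hdeg⟩
    have h1 := hdeg 1
    have hk' := hdeg k
    rw [deg_insert_add G _ 1 (one_mem_s k) hkG] at h1
    rw [deg_insert_add G _ k (by rw [Sym2.mem_iff]; omega) hkG] at hk'
    omega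
  · rintro ⟨h1, hk'⟩
    refine ⟨Finset.insert_subset (s_mem_EK hk hkn) hG.1, fun v => ?_⟩
    by_cases hv : v ∈ s(1, k)
    · rw [Sym2.mem_iff] at hv
      rcases hv with rfl | rfl
      · rw [deg_insert_add G _ 1 (one_mem_s k) hkG]; omega
      · rw [deg_insert_add G _ v (by rw [Sym2.mem_iff]; omega) hkG]; omega
    · rw [deg_insert_of_notMem G _ v hv]
      exact hG.2 v

/-- Auxiliary predicates for the invariant. -/
abbrev allNo (i : ℕ) (G : Finset (Sym2 ℕ)) : Prop := ∀ j, 2 ≤ j → j ≤ i → s(1, j) ∉ G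

abbrev allDeg (n i : ℕ) (G : Finset (Sym2 ℕ)) : Prop := ∀ j, 2 ≤ j → j ≤ i → deg G j = n - 2

abbrev Phi (n i : ℕ) (G : Finset (Sym2 ℕ)) : Prop :=
  s(1, 2) ∉ G ∧
    ((deg G 1 = n - 2 ∧ (deg G 2 < n - 2 ∨ allNo i G)) ∨ (allNo i G ∧ allDeg n i G))

lemma mem_pair {α : Type*} {s : Set α} {p : α → Prop} {x : α} :
    x ∈ {y | y ∈ s ∧ p y} ↔ x ∈ s ∧ p x := Iff.rfl

lemma allNo_erase {i k : ℕ} (hik : i < k) (G : Finset (Sym2 ℕ)) :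
    allNo i (G.erase s(1, k)) ↔ allNo i G := by
  apply forall_congr'; intro j
  by_cases hj : 2 ≤ j ∧ j ≤ i
  · simp only [hj.1, hj.2, forall_true_left, true_implies]
    rw [Finset.mem_erase]
    have hne : s(1, j) ≠ s(1, k) := by
      rw [Ne, Sym2.eq_iff]; omega
    simp [hne]
  · constructor <;> intro h h2 hji <;> exact absurd ⟨h2, hji⟩ hj

lemma allNo_insert {i k : ℕ} (hik : i < k) (hk : 2 ≤ k) (G : Finset (Sym2 ℕ)) :
    allNo i (insert s(1, k) G) ↔ allNo i G := by
  apply forall_congr'; intro j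
  by_cases hj : 2 ≤ j ∧ j ≤ i
  · simp only [hj.1, hj.2, forall_true_left, true_implies]
    rw [Finset.mem_insert]
    have hne : s(1, j) ≠ s(1, k) := by
      rw [Ne, Sym2.eq_iff]; omega
    simp [hne]
  · constructor <;> intro h h2 hji <;> exact absurd ⟨h2, hji⟩ hj

lemma allDeg_erase {n i k : ℕ} (hik : i < k) (G : Finset (Sym2 ℕ)) :
    allDeg n i (G.erase s(1, k)) ↔ allDeg n i G := by
  apply forall_congr'; intro j
  by_cases hj : 2 ≤ j ∧ j ≤ i
  · simp only [hj.1, hj.2, forall_true_left, true_implies]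
    rw [deg_erase_of_notMem G _ j (j_notMem_s hj.1 (by omega))]
  · constructor <;> intro h h2 hji <;> exact absurd ⟨h2, hji⟩ hj

lemma allDeg_insert {n i k : ℕ} (hik : i < k) (G : Finset (Sym2 ℕ)) :
    allDeg n i (insert s(1, k) G) ↔ allDeg n i G := by
  apply forall_congr'; intro j
  by_cases hj : 2 ≤ j ∧ j ≤ i
  · simp only [hj.1, hj.2, forall_true_left, true_implies]
    rw [deg_insert_of_notMem G _ j (j_notMem_s hj.1 (by omega))]
  · constructor <;> intro h h2 hji <;> exact absurd ⟨h2, hji⟩ hj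

/-- Key invariant: for `2 ≤ i ≤ n`, `A i = {G ∈ MK n (n-2) | Phi n i G}`. -/
lemma key (n : ℕ) (hn : 3 ≤ n) (A : ℕ → Set (Finset (Sym2 ℕ)))
    (hA1 : A 1 = MK n (n - 2))
    (hstep : ∀ i, 2 ≤ i → i ≤ n →
      A i = A (i - 1) \
        {G ∈ A (i - 1) | G.erase s(1, i) ∈ A (i - 1) ∧ insert s(1, i) G ∈ A (i - 1)}) :
    ∀ i, 2 ≤ i → i ≤ n → A i = {G ∈ MK n (n - 2) | Phi n i G} := by
  intro i hi
  induction i, hi using Nat.le_induction with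
  | base =>
    intro h2n
    rw [hstep 2 le_rfl h2n]
    simp only [show (2 : ℕ) - 1 = 1 from rfl]
    rw [hA1]
    ext G
    simp only [Set.mem_diff, mem_pair]
    constructor
    · rintro ⟨hG, hrem⟩
      refine ⟨hG, ?_⟩
      have hrem' : insert s(1, 2) G ∉ MK n (n - 2) :=
        fun hins => hrem ⟨hG, erase_mem_MK hG _, hins⟩
      by_cases h12 : s(1, 2) ∈ G
      · exact absurd (by rw [Finset.insert_eq_self.2 h12]; exact hG) hrem'
      · rw [insert_mem_MK_iff hG le_rfl (by omega) h12] at hrem'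
        rw [not_and_or] at hrem'
        have h1 := hG.2 1
        have h2 := hG.2 2
        refine ⟨h12, ?_⟩
        by_cases hd2 : deg G 2 = n - 2
        · refine Or.inr ⟨?_, ?_⟩
          · intro j hj hj'
            have hj2 : j = 2 := by omega
            subst hj2; exact h12
          · intro j hj hj'
            have hj2 : j = 2 := by omega
            subst hj2; exact hd2
        · exact Or.inl ⟨by omega, Or.inl (by omega)⟩
    · rintro ⟨hG, h12, hPhi⟩
      refine ⟨hG, fun h => ?_⟩
      obtain ⟨-, -, hins⟩ := h
      rw [insert_mem_MK_iff hG le_rfl (by omega) h12] at hins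
      rcases hPhi with ⟨hd1, -⟩ | ⟨-, hD⟩
      · omega
      · have := hD 2 le_rfl le_rfl; omega
  | succ i hi2 ih =>
    intro hin
    set k := i + 1 with hk
    have hik : i ≤ n := by omega
    have hAi := ih hik
    have hstepk := hstep k (by omega) hin
    have hk1 : k - 1 = i := by omega
    rw [hk1] at hstepk
    rw [hstepk, hAi]
    ext G
    simp only [Set.mem_diff, mem_pair]
    constructor
    · rintro ⟨⟨hG, h12, hPhi'⟩, hrem⟩
      refine ⟨hG, h12, ?_⟩
      have hd1 := hG.2 1
      have hd2 := hG.2 2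
      have hdk := hG.2 k
      by_cases hkG : s(1, k) ∈ G
      · -- s(1,k) ∈ G : removal condition is allNo i G ∧ allDeg n i G
        have herase : G.erase s(1, k) ∈ MK n (n - 2) := erase_mem_MK hG _
        have hremc : ¬ (allNo i G ∧ allDeg n i G) := by
          rintro ⟨haN, haD⟩
          refine hrem ⟨⟨hG, h12, hPhi'⟩, ⟨herase, fun h => h12 (Finset.mem_erase.1 h).2,
            Or.inr ⟨(allNo_erase (by omega) G).2 haN, (allDeg_erase (by omega) G).2 haD⟩⟩, ?_⟩
          rw [Finset.insert_eq_self.2 hkG]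
          exact ⟨hG, h12, hPhi'⟩
        left
        rcases hPhi' with ⟨hd1e, hor⟩ | ⟨haN, haD⟩
        · refine ⟨hd1e, Or.inl ?_⟩
          rcases hor with h | haN
          · exact h
          · by_cases hi3 : 3 ≤ i
            · exfalso
              have := deg_one_le hG.1 k (fun j hj hjk => haN j hj (by omega))
              omega
            · have hi2' : i = 2 := by omega
              have hnD : ¬ allDeg n i G := fun h => hremc ⟨haN, h⟩
              have hne : deg G 2 ≠ n - 2 := fun hd => hnD (fun j hj hji => by
                have hj2 : j = 2 := by omega
                subst hj2; exact hd)
              omega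
        · exact absurd ⟨haN, haD⟩ hremc
      · -- s(1,k) ∉ G
        have herase : G.erase s(1, k) = G := Finset.erase_eq_of_notMem hkG
        have haN' : allNo i G → deg G 1 ≤ n - k := by
          intro haN
          have := deg_one_le hG.1 (k + 1) (fun j hj hjk => by
            by_cases hji : j ≤ i
            · exact haN j hj hji
            · have hjk' : j = k := by omega
              subst hjk'; exact hkG)
          omega
        have haD2 : allDeg n i G → deg G 2 = n - 2 := fun h => h 2 le_rfl hi2
        have hremc : ¬ (deg G 1 < n - 2 ∧ deg G k < n - 2 ∧
            ((deg G 1 + 1 = n - 2 ∧ (deg G 2 < n - 2 ∨ allNo i G)) ∨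
              (allNo i G ∧ allDeg n i G))) := by
          rintro ⟨hlt1, hltk, hP⟩
          have hins : insert s(1, k) G ∈ MK n (n - 2) :=
            (insert_mem_MK_iff hG (by omega) hin hkG).2 ⟨hlt1, hltk⟩
          refine hrem ⟨⟨hG, h12, hPhi'⟩, ?_, hins, ?_, ?_⟩
          · rw [herase]; exact ⟨hG, h12, hPhi'⟩
          · rw [Finset.mem_insert]
            push_neg
            exact ⟨by rw [Ne, Sym2.eq_iff]; omega, h12⟩
          · rw [deg_insert_add G _ 1 (one_mem_s k) hkG,
              deg_insert_of_notMem G _ 2 (two_notMem_s (by omega)),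
              allNo_insert (by omega) (by omega) G, allDeg_insert (by omega) G]
            exact hP
        have haNk : allNo k G ↔ allNo i G := by
          constructor
          · intro h j hj hji; exact h j hj (by omega)
          · intro h j hj hji
            by_cases hji' : j ≤ i
            · exact h j hj hji'
            · have hjk' : j = k := by omega
              subst hjk'; exact hkG
        have haDk : allDeg n k G ↔ allDeg n i G ∧ deg G k = n - 2 := by
          constructor
          · intro h
            exact ⟨fun j hj hji => h j hj (by omega), h k (by omega) le_rfl⟩
          · rintro ⟨h, hk'⟩ j hj hji
            by_cases hji' : j ≤ i
            · exact h j hj hji'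
            · have hjk' : j = k := by omega
              subst hjk'; exact hk'
        rw [haNk, haDk]
        rcases hPhi' with ⟨hd1e, hor⟩ | ⟨haN, haD⟩
        · exact Or.inl ⟨hd1e, hor⟩
        · have hb := haN' haN
          have h2 := haD2 haD
          refine Or.inr ⟨haN, haD, ?_⟩
          by_contra hne
          exact hremc ⟨by omega, by omega, Or.inr ⟨haN, haD⟩⟩
    · rintro ⟨hG, h12, hPhi'⟩
      have hd1 := hG.2 1
      have hd2 := hG.2 2
      have hdk := hG.2 k
      by_cases hkG : s(1, k) ∈ G
      · -- allNo k G fails, so hPhi' gives deg G 1 = n-2 and deg G 2 < n-2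
        have hNo : ¬ allNo k G := fun h => h k (by omega) le_rfl hkG
        rcases hPhi' with ⟨hd1e, hor⟩ | ⟨haN, -⟩
        swap
        · exact absurd haN hNo
        have hd2lt : deg G 2 < n - 2 := by
          rcases hor with h | h
          · exact h
          · exact absurd h hNo
        refine ⟨⟨hG, h12, Or.inl ⟨hd1e, Or.inl hd2lt⟩⟩, ?_⟩
        rintro ⟨-, ⟨hErMK, h12', hPhiEr⟩, -⟩
        rcases hPhiEr with ⟨hdEr, -⟩ | ⟨-, haDEr⟩
        · have := deg_erase_add_one G s(1, k) 1 (one_mem_s k) hkG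
          omega
        · have := ((allDeg_erase (n := n) (i := i) (by omega) G).1 haDEr) 2 le_rfl hi2
          omega
      · -- s(1,k) ∉ G
        have haNk : allNo k G ↔ allNo i G := by
          constructor
          · intro h j hj hji; exact h j hj (by omega)
          · intro h j hj hji
            by_cases hji' : j ≤ i
            · exact h j hj hji'
            · have hjk' : j = k := by omega
              subst hjk'; exact hkG
        have haDk : allDeg n k G → allDeg n i G ∧ deg G k = n - 2 := fun h =>
          ⟨fun j hj hji => h j hj (by omega), h k (by omega) le_rfl⟩
        refine ⟨⟨hG, h12, ?_⟩, ?_⟩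
        · rcases hPhi' with ⟨hd1e, hor⟩ | ⟨haN, haD⟩
          · exact Or.inl ⟨hd1e, hor.imp_right haNk.1⟩
          · exact Or.inr ⟨haNk.1 haN, (haDk haD).1⟩
        · rintro ⟨-, -, hInsMK, -⟩
          have hlt := (insert_mem_MK_iff hG (by omega) hin hkG).1 hInsMK
          rcases hPhi' with ⟨hd1e, -⟩ | ⟨-, haD⟩
          · omega
          · have := (haDk haD).2
            omega

end StepOneAux

/-- Claim 3.3 (Step 1): starting from `A_{1,1} = M_{n-2}(K_n)` and performing, for
`i = 2, …, n`, the element matching using the vertex `{1,i}` (removing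
`N_{1,i} = {G ∈ A_{1,i-1} : G - {1,i} ∈ A_{1,i-1} and G + {1,i} ∈ A_{1,i-1}}`),
the remaining set of critical cells is `A_{1,n} = B_{1,2} ⊔ C_1`. -/
theorem step_one_critical_cells (n : ℕ) (hn : 3 ≤ n)
    (A : ℕ → Set (Finset (Sym2 ℕ)))
    (hA1 : A 1 = MK n (n - 2))
    (hstep : ∀ i, 2 ≤ i → i ≤ n →
      A i = A (i - 1) \
        {G ∈ A (i - 1) | G.erase s(1, i) ∈ A (i - 1) ∧ insert s(1, i) G ∈ A (i - 1)}) :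
    let B12 : Set (Finset (Sym2 ℕ)) :=
      {G ∈ A 1 | s(1, 2) ∉ G ∧ deg G 2 < n - 2 ∧ deg G 1 = n - 2}
    let C1 : Set (Finset (Sym2 ℕ)) :=
      {G ∈ A 1 | ∀ i, 2 ≤ i → i ≤ n → s(1, i) ∉ G ∧ deg G i = n - 2}
    A n = B12 ∪ C1 ∧ Disjoint B12 C1 := by
  intro B12 C1
  have hkey := StepOneAux.key n hn A hA1 hstep n (by omega) le_rfl
  have hd10 : ∀ G : Finset (Sym2 ℕ), G ⊆ EK n →
      (∀ i, 2 ≤ i → i ≤ n → s(1, i) ∉ G) → deg G 1 = 0 := by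
    intro G hG h
    have := StepOneAux.deg_one_le hG (n + 1) (fun j hj hjn => h j hj (by omega))
    omega
  constructor
  · show A n = {G ∈ A 1 | s(1, 2) ∉ G ∧ deg G 2 < n - 2 ∧ deg G 1 = n - 2} ∪
        {G ∈ A 1 | ∀ i, 2 ≤ i → i ≤ n → s(1, i) ∉ G ∧ deg G i = n - 2}
    rw [hkey, hA1]
    ext G
    simp only [Set.mem_union, StepOneAux.mem_pair]
    constructor
    · rintro ⟨hG, h12, hPhi⟩
      rcases hPhi with ⟨hd1, hor⟩ | ⟨haN, haD⟩
      · left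
        refine ⟨hG, h12, ?_, hd1⟩
        rcases hor with h | h
        · exact h
        · exfalso
          have := hd10 G hG.1 h
          omega
      · right
        exact ⟨hG, fun i hi hin => ⟨haN i hi hin, haD i hi hin⟩⟩
    · rintro (⟨hG, h12, hd2, hd1⟩ | ⟨hG, h⟩)
      · exact ⟨hG, h12, Or.inl ⟨hd1, Or.inl hd2⟩⟩
      · exact ⟨hG, (h 2 le_rfl (by omega)).1,
          Or.inr ⟨fun i hi hin => (h i hi hin).1, fun i hi hin => (h i hi hin).2⟩⟩
  · rw [Set.disjoint_left]
    intro G hB hC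
    have hB' : G ∈ A 1 ∧ s(1, 2) ∉ G ∧ deg G 2 < n - 2 ∧ deg G 1 = n - 2 := hB
    have hC' : G ∈ A 1 ∧ ∀ i, 2 ≤ i → i ≤ n → s(1, i) ∉ G ∧ deg G i = n - 2 := hC
    have hG : G ∈ MK n (n - 2) := hA1 ▸ hB'.1
    have := hd10 G hG.1 (fun i hi hin => (hC'.2 i hi hin).1)
    omega
end

section
/- Let n ≥ 4 and 2 ≤ k ≤ n−1. Set A_{k,k} = B_{k−1,k} = {G ∈ M_{n−2}(K_n) : {i,i+1} ∉ G for every i ∈ [k−1], deg_G(1) = n−2, deg_G(i) = n−3 for every i ∈ {2,...,k−1}, and deg_G(k) < n−2}, and define N_{k,k+1} = {G ∈ A_{k,k} : G ∖ {{k,k+1}} ∈ A_{k,k} and G ∪ {{k,k+1}} ∈ A_{k,k}} and A_{k,k+1} = A_{k,k} ∖ N_{k,k+1}. Then A_{k,k+1} = B_{k,k+1} ⊔ C_{k,k+1}, a disjoint union, where B_{k,k+1} = {G ∈ A_{k,k} : {k,k+1} ∉ G, deg_G(k+1) < n−2, deg_G(k) = n−3} and C_{k,k+1} = {G ∈ A_{k,k}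 : {k,k+1} ∉ G, deg_G(k+1) = n−2}. -/
lemma deg_subset_le {G H : Finset (Sym2 ℕ)} (h : G ⊆ H) (v : ℕ) : deg G v ≤ deg H v :=
  Finset.card_le_card (Finset.filter_subset_filter _ h)

lemma deg_insert_of_notMem_edge {e : Sym2 ℕ} {v : ℕ} (G : Finset (Sym2 ℕ)) (h : v ∉ e) :
    deg (insert e G) v = deg G v := by
  unfold deg
  rw [Finset.filter_insert, if_neg h]

lemma deg_insert_of_mem_edge {e : Sym2 ℕ} {v : ℕ} {G : Finset (Sym2 ℕ)} (hv : v ∈ e)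
    (he : e ∉ G) : deg (insert e G) v = deg G v + 1 := by
  unfold deg
  rw [Finset.filter_insert, if_pos hv,
    Finset.card_insert_of_notMem (fun h => he (Finset.mem_of_mem_filter _ h))]

lemma deg_erase_of_notMem_edge {e : Sym2 ℕ} {v : ℕ} (G : Finset (Sym2 ℕ)) (h : v ∉ e) :
    deg (G.erase e) v = deg G v := by
  unfold deg
  rw [Finset.filter_erase, Finset.erase_eq_of_notMem (by simp [h])]

/-- The predicate defining `A_{k,k}`. -/
def AkkP (n k : ℕ) (G : Finset (Sym2 ℕ)) : Prop :=
  G ∈ MK n (n - 2) ∧ (∀ i ∈ Finset.Icc 1 (k - 1), s(i, i + 1) ∉ G) ∧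
    deg G 1 = n - 2 ∧ (∀ i ∈ Finset.Icc 2 (k - 1), deg G i = n - 3) ∧
    deg G k < n - 2

lemma one_notMem_edge {k : ℕ} (hk : 2 ≤ k) : (1 : ℕ) ∉ s(k, k + 1) := by
  simp only [Sym2.mem_iff]; omega

lemma AkkP_erase {n k : ℕ} (hk : 2 ≤ k) {G : Finset (Sym2 ℕ)} (hA : AkkP n k G) :
    AkkP n k (G.erase s(k, k + 1)) := by
  obtain ⟨⟨hsub, hdeg⟩, hedges, hd1, hdi, hdk⟩ := hA
  refine ⟨⟨(Finset.erase_subset _ _).trans hsub,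
    fun v => (deg_subset_le (Finset.erase_subset _ _) v).trans (hdeg v)⟩,
    fun i hi hmem => hedges i hi (Finset.mem_of_mem_erase hmem), ?_, ?_, ?_⟩
  · rw [deg_erase_of_notMem_edge _ (one_notMem_edge hk)]; exact hd1
  · intro i hi
    rw [Finset.mem_Icc] at hi
    rw [deg_erase_of_notMem_edge _ (by simp only [Sym2.mem_iff]; omega)]
    exact hdi i (Finset.mem_Icc.2 hi)
  · exact lt_of_le_of_lt (deg_subset_le (Finset.erase_subset _ _) k) hdk

lemma AkkP_insert {n k : ℕ} (hn : 4 ≤ n) (hk : 2 ≤ k) (hkn : k ≤ n - 1)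
    {G : Finset (Sym2 ℕ)} (hA : AkkP n k G) (hs : s(k, k + 1) ∉ G)
    (hdk : deg G k + 1 < n - 2) (hdk1 : deg G (k + 1) + 1 ≤ n - 2) :
    AkkP n k (insert s(k, k + 1) G) := by
  obtain ⟨⟨hsub, hdeg⟩, hedges, hd1, hdi, _⟩ := hA
  have hEK : s(k, k + 1) ∈ EK n := by
    unfold EK
    rw [Finset.mem_filter, Finset.mk_mem_sym2_iff]
    refine ⟨⟨?_, ?_⟩, by simp [Sym2.isDiag_iff_proj_eq]⟩ <;> rw [Finset.mem_Icc] <;> omega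
  refine ⟨⟨Finset.insert_subset hEK hsub, fun v => ?_⟩, ?_, ?_, ?_, ?_⟩
  · by_cases hv : v ∈ s(k, k + 1)
    · rw [deg_insert_of_mem_edge hv hs]
      rw [Sym2.mem_iff] at hv
      rcases hv with rfl | rfl
      · omega
      · omega
    · rw [deg_insert_of_notMem_edge _ hv]; exact hdeg v
  · intro i hi hmem
    rw [Finset.mem_Icc] at hi
    rcases Finset.mem_insert.1 hmem with heq | hmem'
    · rw [Sym2.eq_iff] at heq; omega
    · exact hedges i (Finset.mem_Icc.2 hi) hmem'
  · rw [deg_insert_of_notMem_edge _ (one_notMem_edge hk)]; exact hd1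
  · intro i hi
    rw [Finset.mem_Icc] at hi
    rw [deg_insert_of_notMem_edge _ (by simp only [Sym2.mem_iff]; omega)]
    exact hdi i (Finset.mem_Icc.2 hi)
  · rw [deg_insert_of_mem_edge (by simp) hs]; omega

/-- Proposition 3.6(1) (Step k, first element matching): with `A_{k,k} = B_{k-1,k}`,
`N_{k,k+1} = {G ∈ A_{k,k} : G - {k,k+1} ∈ A_{k,k} and G + {k,k+1} ∈ A_{k,k}}` and
`A_{k,k+1} = A_{k,k} \ N_{k,k+1}`, we have `A_{k,k+1} = B_{k,k+1} ⊔ C_{k,k+1}`. -/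
theorem step_k_first_matching (n k : ℕ) (hn : 4 ≤ n) (hk : 2 ≤ k) (hkn : k ≤ n - 1) :
    let Akk : Set (Finset (Sym2 ℕ)) :=
      {G ∈ MK n (n - 2) | (∀ i ∈ Finset.Icc 1 (k - 1), s(i, i + 1) ∉ G) ∧
        deg G 1 = n - 2 ∧ (∀ i ∈ Finset.Icc 2 (k - 1), deg G i = n - 3) ∧
        deg G k < n - 2}
    let Nk : Set (Finset (Sym2 ℕ)) :=
      {G ∈ Akk | G.erase s(k, k + 1) ∈ Akk ∧ insert s(k, k + 1) G ∈ Akk}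
    let Ak1 : Set (Finset (Sym2 ℕ)) := Akk \ Nk
    let B : Set (Finset (Sym2 ℕ)) :=
      {G ∈ Akk | s(k, k + 1) ∉ G ∧ deg G (k + 1) < n - 2 ∧ deg G k = n - 3}
    let C : Set (Finset (Sym2 ℕ)) :=
      {G ∈ Akk | s(k, k + 1) ∉ G ∧ deg G (k + 1) = n - 2}
    Ak1 = B ∪ C ∧ Disjoint B C := by
  intro Akk Nk Ak1 B C
  have hAkk : ∀ G : Finset (Sym2 ℕ), G ∈ Akk ↔ AkkP n k G := fun _ => Iff.rfl
  have hkmem : (k : ℕ) ∈ s(k, k + 1) := by simp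
  have hk1mem : (k + 1 : ℕ) ∈ s(k, k + 1) := by simp
  constructor
  · ext G
    simp only [Ak1, Nk, Set.mem_diff, Set.mem_setOf_eq, Set.mem_union, B, C]
    rw [hAkk]
    constructor
    · rintro ⟨hA, hN⟩
      by_cases hs : s(k, k + 1) ∈ G
      · exact absurd ⟨(hAkk G).2 hA,
          (hAkk _).2 (AkkP_erase hk hA), by rw [Finset.insert_eq_self.2 hs]; exact (hAkk G).2 hA⟩ hN
      · obtain ⟨⟨hsub, hdeg⟩, hedges, hd1, hdi, hdk⟩ := hA
        by_cases hC : deg G (k + 1) = n - 2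
        · exact Or.inr ⟨⟨⟨hsub, hdeg⟩, hedges, hd1, hdi, hdk⟩, hs, hC⟩
        · have hk1lt : deg G (k + 1) < n - 2 := lt_of_le_of_ne (hdeg (k + 1)) hC
          left
          refine ⟨⟨⟨hsub, hdeg⟩, hedges, hd1, hdi, hdk⟩, hs, hk1lt, ?_⟩
          by_contra hne
          exact hN ⟨(hAkk G).2 ⟨⟨hsub, hdeg⟩, hedges, hd1, hdi, hdk⟩,
            by rw [Finset.erase_eq_of_notMem hs]; exact (hAkk G).2 ⟨⟨hsub, hdeg⟩, hedges, hd1, hdi, hdk⟩,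
            (hAkk _).2 (AkkP_insert hn hk hkn ⟨⟨hsub, hdeg⟩, hedges, hd1, hdi, hdk⟩ hs
              (by omega) (by omega))⟩
    · rintro (⟨hA, hs, hk1lt, hkeq⟩ | ⟨hA, hs, hk1eq⟩) <;>
      · refine ⟨(hAkk G).1 hA, fun hmem => ?_⟩
        obtain ⟨-, -, hins⟩ := hmem
        obtain ⟨⟨-, hdegi⟩, -, -, -, hdki⟩ := (hAkk _).1 hins
        rw [deg_insert_of_mem_edge hkmem hs] at hdki
        have := hdegi (k + 1)
        rw [deg_insert_of_mem_edge hk1mem hs] at this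
        omega
  · rw [Set.disjoint_left]
    rintro G ⟨_, _, hlt, _⟩ ⟨_, _, heq⟩
    omega
end

section
/- Let n ≥ 3 and 1 ≤ k ≤ n−1, and let B_{k,k+1} = {G ∈ M_{n−2}(K_n) : {i,i+1} ∉ G for every i ∈ [k], deg_G(1) = n−2, deg_G(i) = n−3 for every i ∈ {2,...,k}, and deg_G(k+1) < n−2}. Then B_{k,k+1} = ∅ if and only if n = k+1. -/
lemma mem_EK {n a b : ℕ} : s(a, b) ∈ EK n ↔ a ∈ Finset.Icc 1 n ∧ b ∈ Finset.Icc 1 n ∧ a ≠ b := by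
  simp [EK, Finset.mk_mem_sym2_iff, and_assoc]

lemma deg_eq {H : Finset (Sym2 ℕ)} {n : ℕ} (hH : H ⊆ EK n) (v : ℕ) :
    deg H v = ((Finset.Icc 1 n).filter (fun j => s(v, j) ∈ H)).card := by
  unfold deg
  refine Finset.card_bij' (fun e he => Sym2.Mem.other' (Finset.mem_filter.mp he).2)
    (fun j _ => s(v, j)) ?_ ?_ ?_ ?_
  · intro e he
    have h := (Finset.mem_filter.mp he).2
    have heH := (Finset.mem_filter.mp he).1
    have heEK := hH heH
    have hmem : Sym2.Mem.other' h ∈ e := Sym2.other_mem' h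
    have : e ∈ (Finset.Icc 1 n).sym2 := (Finset.mem_filter.mp heEK).1
    rw [Finset.mem_filter]
    refine ⟨(Finset.mem_sym2_iff.mp this) _ hmem, ?_⟩
    rw [Sym2.other_spec' h]; exact heH
  · intro j hj
    rw [Finset.mem_filter] at hj ⊢
    exact ⟨hj.2, Sym2.mem_mk_left _ _⟩
  · intro e he
    exact Sym2.other_spec' _
  · intro j hj
    have : s(v, Sym2.Mem.other' (Finset.mem_filter.mp (by
      rw [Finset.mem_filter]; exact ⟨(Finset.mem_filter.mp hj).2, Sym2.mem_mk_left _ _⟩ :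
        s(v,j) ∈ H.filter (fun e => v ∈ e))).2) = s(v, j) := Sym2.other_spec' _
    exact Sym2.congr_right.mp this

/-- The witness graph: all non-consecutive edges whose smaller endpoint is at most `k`. -/
def Gw (n k : ℕ) : Finset (Sym2 ℕ) :=
  (EK n).filter (fun e => e.inf ≤ k ∧ e.inf + 2 ≤ e.sup)

lemma Gw_subset (n k : ℕ) : Gw n k ⊆ EK n := Finset.filter_subset _ _

lemma mem_Gw {n k a b : ℕ} : s(a, b) ∈ Gw n k ↔
    ((a ∈ Finset.Icc 1 n ∧ b ∈ Finset.Icc 1 n ∧ a ≠ b) ∧ min a b ≤ k ∧ min a b + 2 ≤ max a b) := by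
  rw [Gw, Finset.mem_filter, mem_EK]
  simp

lemma Gw_filter (n k v : ℕ) :
    (Finset.Icc 1 n).filter (fun j => s(v, j) ∈ Gw n k) =
    (Finset.Icc 1 n).filter (fun j =>
      (v ∈ Finset.Icc 1 n ∧ v ≠ j) ∧ min v j ≤ k ∧ min v j + 2 ≤ max v j) := by
  ext j
  simp only [Finset.mem_filter, mem_Gw]
  tauto

lemma deg_Gw_one {n k : ℕ} (hn : 3 ≤ n) (hk1 : 1 ≤ k) : deg (Gw n k) 1 = n - 2 := by
  rw [deg_eq (Gw_subset n k) 1, Gw_filter]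
  have : (Finset.Icc 1 n).filter (fun j =>
      (1 ∈ Finset.Icc 1 n ∧ 1 ≠ j) ∧ min 1 j ≤ k ∧ min 1 j + 2 ≤ max 1 j) = Finset.Icc 3 n := by
    ext j
    simp only [Finset.mem_filter, Finset.mem_Icc]
    omega
  rw [this, Nat.card_Icc]
  omega

lemma deg_Gw_mid {n k i : ℕ} (hn : 3 ≤ n) (hkn : k ≤ n - 2) (hi2 : 2 ≤ i) (hik : i ≤ k) :
    deg (Gw n k) i = n - 3 := by
  rw [deg_eq (Gw_subset n k) i, Gw_filter]
  have : (Finset.Icc 1 n).filter (fun j =>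
      (i ∈ Finset.Icc 1 n ∧ i ≠ j) ∧ min i j ≤ k ∧ min i j + 2 ≤ max i j) =
      Finset.Icc 1 n \ Finset.Icc (i - 1) (i + 1) := by
    ext j
    simp only [Finset.mem_filter, Finset.mem_sdiff, Finset.mem_Icc]
    omega
  rw [this, Finset.card_sdiff_of_subset (by rw [Finset.Icc_subset_Icc_iff (by omega)]; omega),
    Nat.card_Icc, Nat.card_Icc]
  omega

lemma deg_Gw_succ {n k : ℕ} (hn : 3 ≤ n) (hkn : k ≤ n - 2) : deg (Gw n k) (k + 1) = k - 1 := by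
  rw [deg_eq (Gw_subset n k) (k + 1), Gw_filter]
  have : (Finset.Icc 1 n).filter (fun j =>
      (k + 1 ∈ Finset.Icc 1 n ∧ k + 1 ≠ j) ∧ min (k+1) j ≤ k ∧ min (k+1) j + 2 ≤ max (k+1) j) =
      Finset.Icc 1 (k - 1) := by
    ext j
    simp only [Finset.mem_filter, Finset.mem_Icc]
    omega
  rw [this, Nat.card_Icc]
  omega

lemma deg_Gw_le {n k : ℕ} (hn : 3 ≤ n) (v : ℕ) : deg (Gw n k) v ≤ n - 2 := by
  rw [deg_eq (Gw_subset n k) v, Gw_filter]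
  by_cases hv : v ∈ Finset.Icc 1 n
  · have hv' := Finset.mem_Icc.mp hv
    have hsub : (Finset.Icc 1 n).filter (fun j =>
        (v ∈ Finset.Icc 1 n ∧ v ≠ j) ∧ min v j ≤ k ∧ min v j + 2 ≤ max v j) ⊆
        Finset.Icc 1 n \ Finset.Icc (max 1 (v - 1)) (min n (v + 1)) := by
      intro j hj
      simp only [Finset.mem_filter, Finset.mem_sdiff, Finset.mem_Icc] at hj ⊢
      omega
    calc _ ≤ (Finset.Icc 1 n \ Finset.Icc (max 1 (v - 1)) (min n (v + 1))).card :=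
        Finset.card_le_card hsub
      _ = n - (min n (v + 1) + 1 - max 1 (v - 1)) := by
        rw [Finset.card_sdiff_of_subset (by rw [Finset.Icc_subset_Icc_iff (by omega)]; omega),
          Nat.card_Icc, Nat.card_Icc]
        omega
      _ ≤ n - 2 := by omega
  · have : (Finset.Icc 1 n).filter (fun j =>
        (v ∈ Finset.Icc 1 n ∧ v ≠ j) ∧ min v j ≤ k ∧ min v j + 2 ≤ max v j) = ∅ := by
      ext j; simp only [Finset.mem_filter, Finset.notMem_empty, iff_false]
      tauto
    rw [this]; simp

/-- Proposition 3.6(4): the set `B_{k,k+1}` is empty if and only if `n = k + 1`. -/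
theorem Bk_empty_iff (n k : ℕ) (hn : 3 ≤ n) (hk1 : 1 ≤ k) (hkn : k ≤ n - 1) :
    ({G ∈ MK n (n - 2) | (∀ i ∈ Finset.Icc 1 k, s(i, i + 1) ∉ G) ∧
        deg G 1 = n - 2 ∧ (∀ i ∈ Finset.Icc 2 k, deg G i = n - 3) ∧
        deg G (k + 1) < n - 2} : Set (Finset (Sym2 ℕ))) = ∅ ↔ n = k + 1 := by
  constructor
  · intro hempty
    by_contra hne
    have hk2 : k ≤ n - 2 := by omega
    have : Gw n k ∈ ({G ∈ MK n (n - 2) | (∀ i ∈ Finset.Icc 1 k, s(i, i + 1) ∉ G) ∧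
        deg G 1 = n - 2 ∧ (∀ i ∈ Finset.Icc 2 k, deg G i = n - 3) ∧
        deg G (k + 1) < n - 2} : Set (Finset (Sym2 ℕ))) := by
      refine ⟨⟨Gw_subset n k, fun v => deg_Gw_le hn v⟩, ?_, deg_Gw_one hn hk1, ?_, ?_⟩
      · intro i hi
        rw [Finset.mem_Icc] at hi
        rw [mem_Gw]
        simp only [Finset.mem_Icc]
        omega
      · intro i hi
        rw [Finset.mem_Icc] at hi
        exact deg_Gw_mid hn hk2 hi.1 hi.2
      · rw [deg_Gw_succ hn hk2]; omega
    rw [hempty] at this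
    exact this
  · intro hnk
    rw [Set.eq_empty_iff_forall_notMem]
    rintro G ⟨⟨hsub, hdegle⟩, hcons, hd1, hdi, hdk1⟩
    -- here n = k + 1, i.e. k = n - 1
    have hk : k = n - 1 := by omega
    -- Step 1: s(1, n) ∈ G
    have h1n : s(1, n) ∈ G := by
      have hcard : ((Finset.Icc 1 n).filter (fun j => s(1, j) ∈ G)).card = n - 2 := by
        rw [← deg_eq hsub 1]; exact hd1
      have hsubN : (Finset.Icc 1 n).filter (fun j => s(1, j) ∈ G) ⊆ Finset.Icc 3 n := by
        intro j hj
        rw [Finset.mem_filter] at hj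
        have hE := mem_EK.mp (hsub hj.2)
        rw [Finset.mem_Icc] at *
        have hj2 : j ≠ 2 := by
          rintro rfl
          exact hcons 1 (Finset.mem_Icc.mpr (by omega)) hj.2
        omega
      have heq : (Finset.Icc 1 n).filter (fun j => s(1, j) ∈ G) = Finset.Icc 3 n := by
        apply Finset.eq_of_subset_of_card_le hsubN
        rw [hcard, Nat.card_Icc]
        omega
      have : n ∈ (Finset.Icc 1 n).filter (fun j => s(1, j) ∈ G) := by
        rw [heq, Finset.mem_Icc]; omega
      exact (Finset.mem_filter.mp this).2
    -- Step 2: s(i, n) ∈ G for all 2 ≤ i ≤ n - 2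
    have hin : ∀ i, 2 ≤ i → i ≤ n - 2 → s(i, n) ∈ G := by
      intro i hi2 hin2
      have hcard : ((Finset.Icc 1 n).filter (fun j => s(i, j) ∈ G)).card = n - 3 := by
        rw [← deg_eq hsub i]
        exact hdi i (Finset.mem_Icc.mpr (by omega))
      have hsubN : (Finset.Icc 1 n).filter (fun j => s(i, j) ∈ G) ⊆
          Finset.Icc 1 n \ Finset.Icc (i - 1) (i + 1) := by
        intro j hj
        rw [Finset.mem_filter] at hj
        have hE := mem_EK.mp (hsub hj.2)
        have hlow : j ≠ i - 1 := by
          rintro rfl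
          have : s(i, i - 1) = s(i - 1, (i - 1) + 1) := by
            have h' : i - 1 + 1 = i := by omega
            rw [h', Sym2.eq_swap]
          rw [this] at hj
          exact hcons (i - 1) (Finset.mem_Icc.mpr (by omega)) hj.2
        have hhigh : j ≠ i + 1 := by
          rintro rfl
          exact hcons i (Finset.mem_Icc.mpr (by omega)) hj.2
        rw [Finset.mem_Icc] at *
        rw [Finset.mem_sdiff, Finset.mem_Icc, Finset.mem_Icc]
        omega
      have heq : (Finset.Icc 1 n).filter (fun j => s(i, j) ∈ G) =
          Finset.Icc 1 n \ Finset.Icc (i - 1) (i + 1) := by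
        apply Finset.eq_of_subset_of_card_le hsubN
        rw [hcard, Finset.card_sdiff_of_subset (by rw [Finset.Icc_subset_Icc_iff (by omega)]; omega),
          Nat.card_Icc, Nat.card_Icc]
        omega
      have : n ∈ (Finset.Icc 1 n).filter (fun j => s(i, j) ∈ G) := by
        rw [heq, Finset.mem_sdiff, Finset.mem_Icc, Finset.mem_Icc]
        omega
      exact (Finset.mem_filter.mp this).2
    -- Step 3: contradiction with deg G (k+1) < n - 2, noting k + 1 = n
    have hkn' : k + 1 = n := by omega
    have hdegn : deg G n < n - 2 := by rwa [hkn'] at hdk1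
    have hbig : Finset.Icc 1 (n - 2) ⊆ (Finset.Icc 1 n).filter (fun j => s(n, j) ∈ G) := by
      intro j hj
      rw [Finset.mem_Icc] at hj
      rw [Finset.mem_filter, Finset.mem_Icc]
      refine ⟨by omega, ?_⟩
      rw [Sym2.eq_swap]
      rcases Nat.eq_or_lt_of_le hj.1 with h1 | h1
      · rw [← h1]; exact h1n
      · exact hin j (by omega) hj.2
    have := Finset.card_le_card hbig
    rw [Nat.card_Icc, ← deg_eq hsub n] at this
    omega
end

section
/- Let n ≥ 4 and 2 ≤ k ≤ n−1. Let C_k = {G ∈ M_{n−2}(K_n) : {i,i+1} ∉ G for every i ∈ [k−1], deg_G(1) = n−2, deg_G(i) = n−3 for every i ∈ {2,...,k−1}, deg_G(k) < n−2, and for every j ∈ {k+1,...,n}, {k,j} ∉ G and deg_G(j) = n−2}, and let B_{k,k+1} = {G ∈ M_{n−2}(K_n) : {i,i+1} ∉ G for every i ∈ [k], deg_G(1) = n−2, deg_G(i) = n−3 for every i ∈ {2,...,k}, and deg_G(k+1) < n−2}. If G ∈ C_k and B_{k,k+1} ≠ ∅, then for all k+1 ≤ i < j ≤ n, neither G ∖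 {{i,j}} nor G ∪ {{i,j}} belongs to B_{k,k+1}. -/
/-- Proposition 3.6(5): if `G ∈ C_k` and `B_{k,k+1} ≠ ∅`, then for all
`k+1 ≤ i < j ≤ n`, neither `G - {i,j}` nor `G + {i,j}` belongs to `B_{k,k+1}`. -/
theorem Ck_not_matched_with_Bk (n k : ℕ) (hn : 4 ≤ n) (hk : 2 ≤ k) (hkn : k ≤ n - 1)
    (G : Finset (Sym2 ℕ))
    (hG : G ∈ ({G ∈ MK n (n - 2) | (∀ i ∈ Finset.Icc 1 (k - 1), s(i, i + 1) ∉ G) ∧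
      deg G 1 = n - 2 ∧ (∀ i ∈ Finset.Icc 2 (k - 1), deg G i = n - 3) ∧
      deg G k < n - 2 ∧
      ∀ j ∈ Finset.Icc (k + 1) n, s(k, j) ∉ G ∧ deg G j = n - 2} :
        Set (Finset (Sym2 ℕ)))) :
    let B : Set (Finset (Sym2 ℕ)) :=
      {G ∈ MK n (n - 2) | (∀ i ∈ Finset.Icc 1 k, s(i, i + 1) ∉ G) ∧
        deg G 1 = n - 2 ∧ (∀ i ∈ Finset.Icc 2 k, deg G i = n - 3) ∧
        deg G (k + 1) < n - 2}
    B ≠ ∅ →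
      ∀ i j, k + 1 ≤ i → i < j → j ≤ n →
        G.erase s(i, j) ∉ B ∧ insert s(i, j) G ∉ B := by
  intro B _hB i j hi hij hj
  obtain ⟨⟨hGsub, _hGdeg⟩, hGno, _hGd1, _hGdmid, _hGdk, hGout⟩ := hG
  have hkn2 : k + 2 ≤ n := by omega
  -- vertex k is not in the edge s(i,j)
  have hknot : ¬ (k ∈ s(i, j)) := by
    rw [Sym2.mem_iff]; omega
  -- deg G k ≤ k - 2
  have hdegk : deg G k ≤ k - 2 := by
    have hsub : G.filter (fun e => k ∈ e) ⊆
        (Finset.Icc 1 (k - 2)).image (fun m => s(k, m)) := by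
      intro e he
      rw [Finset.mem_filter] at he
      obtain ⟨heG, hke⟩ := he
      obtain ⟨m, rfl⟩ := Sym2.mem_iff_exists.mp hke
      have hEK := hGsub heG
      rw [EK, Finset.mem_filter, Finset.mk_mem_sym2_iff, Sym2.mk_isDiag_iff] at hEK
      obtain ⟨⟨_, hm⟩, hne⟩ := hEK
      rw [Finset.mem_Icc] at hm
      -- m ≠ k - 1
      have hm1 : m ≠ k - 1 := by
        intro h
        have hmem : k - 1 ∈ Finset.Icc 1 (k - 1) := by
          rw [Finset.mem_Icc]; omega
        have := hGno (k - 1) hmem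
        have hkk : k - 1 + 1 = k := by omega
        rw [hkk] at this
        apply this
        rw [Sym2.eq_swap]
        rw [h] at heG
        exact heG
      -- m ∉ [k+1, n]
      have hm2 : ¬ (k + 1 ≤ m ∧ m ≤ n) := by
        intro ⟨h1, h2⟩
        exact (hGout m (Finset.mem_Icc.mpr ⟨h1, h2⟩)).1 heG
      refine Finset.mem_image.mpr ⟨m, Finset.mem_Icc.mpr ⟨by omega, by omega⟩, rfl⟩
    calc deg G k ≤ ((Finset.Icc 1 (k - 2)).image (fun m => s(k, m))).card :=
          Finset.card_le_card hsub
      _ ≤ (Finset.Icc 1 (k - 2)).card := Finset.card_image_le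
      _ = k - 2 := by rw [Nat.card_Icc]; omega
  -- any G' with deg G' k = deg G k is not in B
  have key : ∀ G' : Finset (Sym2 ℕ), deg G' k = deg G k → G' ∉ B := by
    intro G' hd hG'B
    obtain ⟨_, _, _, hmid, _⟩ := hG'B
    have hkk : deg G' k = n - 3 := hmid k (Finset.mem_Icc.mpr ⟨hk, le_refl k⟩)
    omega
  constructor
  · apply key
    unfold deg
    rw [Finset.filter_erase, Finset.erase_eq_of_notMem]
    intro h
    exact hknot (Finset.mem_filter.mp h).2
  · apply key
    unfold deg
    rw [Finset.filter_insert, if_neg hknot]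
end

section
/- Let n ≥ 2. Define H_{1,0} = M_{n−1}(K_{n,n}) and, for i = 1,...,n, N_{1,i} = {G ∈ H_{1,i−1} : G ∖ {{a_1,b_i}} ∈ H_{1,i−1} and G ∪ {{a_1,b_i}} ∈ H_{1,i−1}} and H_{1,i} = H_{1,i−1} ∖ N_{1,i}. Then H_{1,n} = {G ∈ H_{1,0} : {a_1,b_1} ∉ G, deg_G(b_1) < n−1, and deg_G(a_1) = n−1}. -/
lemma mem_EK_s12 {m n i j : ℕ} :
    s(Sum.inl i, Sum.inr j) ∈ EKbip m n ↔ (1 ≤ i ∧ i ≤ m) ∧ (1 ≤ j ∧ j ≤ n) := by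
  constructor
  · intro h
    simp only [EKbip, Finset.mem_image, Finset.mem_product, Finset.mem_Icc] at h
    obtain ⟨⟨p1, p2⟩, ⟨h1, h2⟩, heq⟩ := h
    rw [Sym2.eq_iff] at heq
    rcases heq with ⟨ha, hb⟩ | ⟨ha, hb⟩
    · cases ha; cases Sum.inr.inj hb; exact ⟨h1, h2⟩
    · exact absurd ha (by simp)
  · rintro ⟨⟨h1, h2⟩, h3, h4⟩
    simp only [EKbip, Finset.mem_image, Finset.mem_product, Finset.mem_Icc]
    exact ⟨(i, j), ⟨⟨h1, h2⟩, ⟨h3, h4⟩⟩, rfl⟩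

lemma EK_form {m n : ℕ} {e : Sym2 BipV} (h : e ∈ EKbip m n) :
    ∃ i j, 1 ≤ i ∧ i ≤ m ∧ 1 ≤ j ∧ j ≤ n ∧ e = s(Sum.inl i, Sum.inr j) := by
  simp only [EKbip, Finset.mem_image, Finset.mem_product, Finset.mem_Icc] at h
  obtain ⟨⟨p1, p2⟩, ⟨⟨h1, h2⟩, ⟨h3, h4⟩⟩, heq⟩ := h
  exact ⟨p1, p2, h1, h2, h3, h4, heq.symm⟩

lemma inj_a (x : ℕ) : Function.Injective (fun j => (s(Sum.inl x, Sum.inr j) : Sym2 BipV)) := by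
  intro a b h
  simp only [Sym2.eq_iff] at h
  rcases h with ⟨-, h⟩ | ⟨h, -⟩
  · exact Sum.inr.inj h
  · exact absurd h (by simp)

lemma inj_b (y : ℕ) : Function.Injective (fun i => (s(Sum.inl i, Sum.inr y) : Sym2 BipV)) := by
  intro a b h
  simp only [Sym2.eq_iff] at h
  rcases h with ⟨h, -⟩ | ⟨-, h⟩
  · exact Sum.inl.inj h
  · exact absurd h (by simp)

lemma filt_a {m n x : ℕ} {G : Finset (Sym2 BipV)} (hG : G ⊆ EKbip m n) :
    G.filter (fun e => Sum.inl x ∈ e) ⊆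
      (Finset.Icc 1 n).image (fun j => s(Sum.inl x, Sum.inr j)) := by
  intro e he
  rw [Finset.mem_filter] at he
  obtain ⟨heG, hev⟩ := he
  obtain ⟨i, j, h1, h2, h3, h4, rfl⟩ := EK_form (hG heG)
  rw [Sym2.mem_iff] at hev
  rcases hev with h | h
  · cases Sum.inl.inj h
    exact Finset.mem_image.2 ⟨j, Finset.mem_Icc.2 ⟨h3, h4⟩, rfl⟩
  · exact absurd h (by simp)

lemma filt_b {m n y : ℕ} {G : Finset (Sym2 BipV)} (hG : G ⊆ EKbip m n) :
    G.filter (fun e => Sum.inr y ∈ e) ⊆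
      (Finset.Icc 1 m).image (fun i => s(Sum.inl i, Sum.inr y)) := by
  intro e he
  rw [Finset.mem_filter] at he
  obtain ⟨heG, hev⟩ := he
  obtain ⟨i, j, h1, h2, h3, h4, rfl⟩ := EK_form (hG heG)
  rw [Sym2.mem_iff] at hev
  rcases hev with h | h
  · exact absurd h (by simp)
  · cases Sum.inr.inj h
    exact Finset.mem_image.2 ⟨i, Finset.mem_Icc.2 ⟨h1, h2⟩, rfl⟩

lemma degB_mono {G H : Finset (Sym2 BipV)} (h : G ⊆ H) (v : BipV) : degB G v ≤ degB H v :=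
  Finset.card_le_card (Finset.filter_subset_filter _ h)

lemma degB_insert_mem {G : Finset (Sym2 BipV)} {e : Sym2 BipV} {v : BipV}
    (he : e ∉ G) (hv : v ∈ e) : degB (insert e G) v = degB G v + 1 := by
  unfold degB
  rw [Finset.filter_insert, if_pos hv, Finset.card_insert_of_notMem (fun h => he (Finset.filter_subset _ _ h))]

lemma degB_insert_not {G : Finset (Sym2 BipV)} {e : Sym2 BipV} {v : BipV}
    (hv : v ∉ e) : degB (insert e G) v = degB G v := by
  unfold degB
  rw [Finset.filter_insert, if_neg hv]

lemma degB_erase_mem {G : Finset (Sym2 BipV)} {e : Sym2 BipV} {v : BipV}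
    (he : e ∈ G) (hv : v ∈ e) : degB G v = degB (G.erase e) v + 1 := by
  have : G = insert e (G.erase e) := (Finset.insert_erase he).symm
  conv_lhs => rw [this]
  rw [degB_insert_mem (Finset.notMem_erase _ _) hv]

lemma degB_erase_not {G : Finset (Sym2 BipV)} {e : Sym2 BipV} {v : BipV}
    (hv : v ∉ e) : degB (G.erase e) v = degB G v := by
  unfold degB
  congr 1
  ext x
  simp only [Finset.mem_filter, Finset.mem_erase]
  constructor
  · rintro ⟨⟨-, h⟩, h2⟩; exact ⟨h, h2⟩
  · rintro ⟨h, h2⟩; exact ⟨⟨fun heq => hv (heq ▸ h2), h⟩, h2⟩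

/-- If `a_1` misses `e_1` but has degree `n-1`, all other edges at `a_1` are present. -/
lemma full_at_a1 {n : ℕ} {G : Finset (Sym2 BipV)} (hG : G ⊆ EKbip n n)
    (h1 : s(Sum.inl 1, Sum.inr 1) ∉ G) (hd : degB G (Sum.inl 1) = n - 1)
    {j : ℕ} (hj2 : 2 ≤ j) (hjn : j ≤ n) : s(Sum.inl 1, Sum.inr j) ∈ G := by
  set f : ℕ → Sym2 BipV := fun j => s(Sum.inl 1, Sum.inr j) with hf
  set F := G.filter (fun e => Sum.inl 1 ∈ e) with hF
  have hsub : F ⊆ ((Finset.Icc 1 n).erase 1).image f := by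
    intro e he
    have := filt_a hG he
    rw [Finset.mem_image] at this
    obtain ⟨k, hk, rfl⟩ := this
    refine Finset.mem_image.2 ⟨k, Finset.mem_erase.2 ⟨?_, hk⟩, rfl⟩
    rintro rfl
    exact h1 (Finset.mem_filter.1 he).1
  have hcard : (((Finset.Icc 1 n).erase 1).image f).card = n - 1 := by
    rw [Finset.card_image_of_injective _ (inj_a 1),
      Finset.card_erase_of_mem (by simp [Finset.mem_Icc]; omega), Nat.card_Icc]; omega
  have heq : F = ((Finset.Icc 1 n).erase 1).image f :=
    Finset.eq_of_subset_of_card_le hsub (by rw [hcard]; exact hd.ge)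
  have : f j ∈ F := by
    rw [heq]
    exact Finset.mem_image.2 ⟨j, Finset.mem_erase.2 ⟨by omega, Finset.mem_Icc.2 ⟨by omega, hjn⟩⟩, rfl⟩
  exact (Finset.mem_filter.1 this).1

/-- If `b_j` misses `e_j = {a_1, b_j}` but has degree `n-1`, all other edges at `b_j` are present. -/
lemma full_at_b {n : ℕ} {G : Finset (Sym2 BipV)} (hG : G ⊆ EKbip n n) {j : ℕ}
    (h1 : s(Sum.inl 1, Sum.inr j) ∉ G) (hd : degB G (Sum.inr j) = n - 1)
    {k : ℕ} (hk2 : 2 ≤ k) (hkn : k ≤ n) : s(Sum.inl k, Sum.inr j) ∈ G := by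
  set f : ℕ → Sym2 BipV := fun i => s(Sum.inl i, Sum.inr j) with hf
  set F := G.filter (fun e => Sum.inr j ∈ e) with hF
  have hsub : F ⊆ ((Finset.Icc 1 n).erase 1).image f := by
    intro e he
    have := filt_b hG he
    rw [Finset.mem_image] at this
    obtain ⟨i, hi, rfl⟩ := this
    refine Finset.mem_image.2 ⟨i, Finset.mem_erase.2 ⟨?_, hi⟩, rfl⟩
    rintro rfl
    exact h1 (Finset.mem_filter.1 he).1
  have hcard : (((Finset.Icc 1 n).erase 1).image f).card = n - 1 := by
    rw [Finset.card_image_of_injective _ (inj_b j),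
      Finset.card_erase_of_mem (by simp [Finset.mem_Icc]; omega), Nat.card_Icc]; omega
  have heq : F = ((Finset.Icc 1 n).erase 1).image f :=
    Finset.eq_of_subset_of_card_le hsub (by rw [hcard]; exact hd.ge)
  have : f k ∈ F := by
    rw [heq]
    exact Finset.mem_image.2 ⟨k, Finset.mem_erase.2 ⟨by omega, Finset.mem_Icc.2 ⟨by omega, hkn⟩⟩, rfl⟩
  exact (Finset.mem_filter.1 this).1

/-- If `a_1` misses two edges `e_1, e_i`, its degree is at most `n - 2`. -/
lemma dega1_le {n : ℕ} {G : Finset (Sym2 BipV)} (hG : G ⊆ EKbip n n)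
    (h1 : s(Sum.inl 1, Sum.inr 1) ∉ G) {i : ℕ} (hi2 : 2 ≤ i) (hin : i ≤ n)
    (hi : s(Sum.inl 1, Sum.inr i) ∉ G) : degB G (Sum.inl 1) ≤ n - 2 := by
  set f : ℕ → Sym2 BipV := fun j => s(Sum.inl 1, Sum.inr j) with hf
  have hsub : G.filter (fun e => Sum.inl 1 ∈ e) ⊆ (((Finset.Icc 1 n).erase 1).erase i).image f := by
    intro e he
    have := filt_a hG he
    rw [Finset.mem_image] at this
    obtain ⟨k, hk, rfl⟩ := this
    refine Finset.mem_image.2 ⟨k, Finset.mem_erase.2 ⟨?_, Finset.mem_erase.2 ⟨?_, hk⟩⟩, rfl⟩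
    · rintro rfl; exact hi (Finset.mem_filter.1 he).1
    · rintro rfl; exact h1 (Finset.mem_filter.1 he).1
  calc degB G (Sum.inl 1) ≤ ((((Finset.Icc 1 n).erase 1).erase i).image f).card :=
        Finset.card_le_card hsub
    _ = n - 2 := by
        rw [Finset.card_image_of_injective _ (inj_a 1),
          Finset.card_erase_of_mem (by simp [Finset.mem_Icc]; omega),
          Finset.card_erase_of_mem (by simp [Finset.mem_Icc]; omega), Nat.card_Icc]; omega

/-- The edge `{a_1, b_j}`. -/
def eA (j : ℕ) : Sym2 BipV := s(Sum.inl 1, Sum.inr j)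

lemma mem_eA_iff {v : BipV} {j : ℕ} : v ∈ eA j ↔ v = Sum.inl 1 ∨ v = Sum.inr j := Sym2.mem_iff

lemma inl_mem_eA (j : ℕ) : (Sum.inl 1 : BipV) ∈ eA j := mem_eA_iff.2 (Or.inl rfl)

lemma inr_mem_eA (j : ℕ) : (Sum.inr j : BipV) ∈ eA j := mem_eA_iff.2 (Or.inr rfl)

lemma inr_not_mem_eA {k j : ℕ} (h : k ≠ j) : (Sum.inr k : BipV) ∉ eA j := by
  rw [mem_eA_iff]
  rintro (h' | h')
  · exact absurd h' (by simp)
  · exact h (Sum.inr.inj h')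

lemma inl_not_mem_eA {k j : ℕ} (h : k ≠ 1) : (Sum.inl k : BipV) ∉ eA j := by
  rw [mem_eA_iff]
  rintro (h' | h')
  · exact h (Sum.inl.inj h')
  · exact absurd h' (by simp)

lemma eA_inj {j k : ℕ} (h : eA j = eA k) : j = k := inj_a 1 h

/-- The critical set `A`. -/
def ASet (n : ℕ) : Set (Finset (Sym2 BipV)) :=
  {G ∈ MBip n n (n - 1) | eA 1 ∉ G ∧ degB G (Sum.inr 1) < n - 1 ∧ degB G (Sum.inl 1) = n - 1}

/-- The auxiliary set `B_i`. -/
def BSet (n i : ℕ) : Set (Finset (Sym2 BipV)) :=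
  {G ∈ MBip n n (n - 1) | ∀ j, 1 ≤ j → j ≤ i → eA j ∉ G ∧ degB G (Sum.inr j) = n - 1}

lemma union_sub_M {n i : ℕ} : ASet n ∪ BSet n i ⊆ MBip n n (n - 1) := by
  rintro G (⟨h, -⟩ | ⟨h, -⟩) <;> exact h

lemma BSet_zero (n : ℕ) : BSet n 0 = MBip n n (n - 1) := by
  ext G
  simp only [BSet, Set.mem_setOf_eq, Set.sep_setOf]
  constructor
  · rintro ⟨h, -⟩; exact h
  · intro h; exact ⟨h, fun j hj1 hj0 => absurd (hj1.trans hj0) (by omega)⟩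

lemma BSet_mono {n i : ℕ} : BSet n (i + 1) ⊆ BSet n i := by
  rintro G ⟨hM, h⟩
  exact ⟨hM, fun j hj1 hji => h j hj1 (by omega)⟩

lemma step_eq {n i : ℕ} (hn : 2 ≤ n) (hi1 : 1 ≤ i) (hin : i ≤ n) :
    (ASet n ∪ BSet n (i - 1)) \
      {G ∈ ASet n ∪ BSet n (i - 1) | G.erase (eA i) ∈ ASet n ∪ BSet n (i - 1) ∧
        insert (eA i) G ∈ ASet n ∪ BSet n (i - 1)} = ASet n ∪ BSet n i := by
  ext G
  simp only [Set.mem_diff, Set.mem_sep_iff, not_and]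
  constructor
  · rintro ⟨hZ, hrem⟩
    rcases hZ with hA | hB
    · exact Or.inl hA
    · -- G ∈ B_{i-1}
      obtain ⟨⟨hsub, hdeg⟩, hBprop⟩ := hB
      by_cases hA' : G ∈ ASet n
      · exact Or.inl hA'
      right
      refine ⟨⟨hsub, hdeg⟩, fun j hj1 hji => ?_⟩
      rcases Nat.lt_or_ge j i with hlt | hge
      · exact hBprop j hj1 (by omega)
      have hji' : j = i := by omega
      subst hji'
      clear hge hji hi1
      -- must show: eA j ∉ G ∧ degB G (inr j) = n - 1; otherwise `G` would be removed
      by_contra hcon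
      have hGZ : G ∈ ASet n ∪ BSet n (j - 1) := Or.inr ⟨⟨hsub, hdeg⟩, hBprop⟩
      by_cases hei : eA j ∈ G
      · -- erase ∈ B_{i-1}, insert = G
        have herase : G.erase (eA j) ∈ ASet n ∪ BSet n (j - 1) := by
          refine Or.inr ⟨⟨(Finset.erase_subset _ _).trans hsub,
            fun v => (degB_mono (Finset.erase_subset _ _) v).trans (hdeg v)⟩,
            fun k hk1 hkj => ?_⟩
          obtain ⟨hk, hdk⟩ := hBprop k hk1 hkj
          refine ⟨fun h => hk (Finset.erase_subset _ _ h), ?_⟩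
          rw [degB_erase_not (inr_not_mem_eA (by omega))]
          exact hdk
        have hinsert : insert (eA j) G ∈ ASet n ∪ BSet n (j - 1) := by
          rw [Finset.insert_eq_self.2 hei]
          exact hGZ
        exact hrem hGZ herase hinsert
      · -- eA j ∉ G, so deg b_j < n - 1; insert ∈ B_{i-1}, erase = G
        have hdbj : degB G (Sum.inr j) < n - 1 := by
          have := hdeg (Sum.inr j)
          rcases Nat.lt_or_ge (degB G (Sum.inr j)) (n - 1) with h | h
          · exact h
          · exact absurd ⟨hei, le_antisymm this h⟩ hcon
        have hda1 : degB G (Sum.inl 1) ≤ n - 2 := by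
          rcases Nat.lt_or_ge 1 j with hj2 | hj2
          · exact dega1_le hsub (hBprop 1 le_rfl (by omega)).1 hj2 hin hei
          · -- j = 1 : use G ∉ ASet
            have : j = 1 := by omega
            subst this
            rcases Nat.lt_or_ge (degB G (Sum.inl 1)) (n - 1) with h | h
            · omega
            · exact absurd ⟨⟨hsub, hdeg⟩, hei, hdbj, le_antisymm (hdeg _) h⟩ hA'
        have herase : G.erase (eA j) ∈ ASet n ∪ BSet n (j - 1) := by
          rw [Finset.erase_eq_of_notMem hei]
          exact hGZ
        have hinsert : insert (eA j) G ∈ ASet n ∪ BSet n (j - 1) := by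
          refine Or.inr ⟨⟨?_, ?_⟩, fun k hk1 hkj => ?_⟩
          · exact Finset.insert_subset (mem_EK_s12.2 ⟨⟨le_rfl, by omega⟩, ⟨hj1, hin⟩⟩) hsub
          · intro v
            by_cases hv : v ∈ eA j
            · rw [degB_insert_mem hei hv]
              rcases mem_eA_iff.1 hv with rfl | rfl
              · omega
              · omega
            · rw [degB_insert_not hv]
              exact hdeg v
          · obtain ⟨hk, hdk⟩ := hBprop k hk1 hkj
            refine ⟨fun h => ?_, ?_⟩
            · rcases Finset.mem_insert.1 h with h | h
              · exact absurd (eA_inj h) (by omega)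
              · exact hk h
            · rw [degB_insert_not (inr_not_mem_eA (by omega))]
              exact hdk
        exact hrem hGZ herase hinsert
  · rintro (hA | hBi)
    · -- G ∈ A survives
      refine ⟨Or.inl hA, fun _ herase hinsert => ?_⟩
      obtain ⟨⟨hsub, hdeg⟩, h1, hb1, ha1⟩ := hA
      rcases Nat.lt_or_ge 1 i with hi2 | hi2
      · -- i ≥ 2 : eA i ∈ G, erase has wrong degrees
        have hei : eA i ∈ G := full_at_a1 hsub h1 ha1 hi2 hin
        have hde : degB (G.erase (eA i)) (Sum.inl 1) = n - 2 := by
          have := degB_erase_mem hei (inl_mem_eA i)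
          omega
        have hdb : degB (G.erase (eA i)) (Sum.inr 1) < n - 1 := by
          rw [degB_erase_not (inr_not_mem_eA (by omega))]
          exact hb1
        rcases herase with ⟨-, -, -, h⟩ | ⟨-, h⟩
        · omega
        · have := (h 1 le_rfl (by omega)).2
          omega
      · -- i = 1 : insert has degree n at a1
        have hieq : i = 1 := by omega
        subst hieq
        have hdn : degB (insert (eA 1) G) (Sum.inl 1) = n := by
          rw [degB_insert_mem h1 (inl_mem_eA 1)]
          omega
        have := (union_sub_M hinsert).2 (Sum.inl 1)
        omega
    · -- G ∈ B_i survives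
      have hBi' : G ∈ BSet n (i - 1) := by
        obtain ⟨hM, h⟩ := hBi
        exact ⟨hM, fun j hj1 hji => h j hj1 (by omega)⟩
      refine ⟨Or.inr hBi', fun _ herase hinsert => ?_⟩
      obtain ⟨⟨hsub, hdeg⟩, h⟩ := hBi
      obtain ⟨hei, hdbi⟩ := h i hi1 le_rfl
      have : degB (insert (eA i) G) (Sum.inr i) = n := by
        rw [degB_insert_mem hei (inr_mem_eA i)]
        omega
      have := (union_sub_M hinsert).2 (Sum.inr i)
      omega

lemma BSet_n_empty {n : ℕ} (hn : 2 ≤ n) : BSet n n = ∅ := by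
  ext G
  simp only [Set.mem_empty_iff_false, iff_false]
  rintro ⟨⟨hsub, hdeg⟩, h⟩
  -- every edge {a_2, b_j} is in G, so deg a_2 = n > n - 1
  have hall : ∀ j, 1 ≤ j → j ≤ n → s(Sum.inl 2, Sum.inr j) ∈ G := by
    intro j hj1 hjn
    obtain ⟨hej, hdj⟩ := h j hj1 hjn
    exact full_at_b hsub hej hdj le_rfl hn
  have hsup : (Finset.Icc 1 n).image (fun j => s(Sum.inl 2, Sum.inr j)) ⊆
      G.filter (fun e => Sum.inl 2 ∈ e) := by
    intro e he
    obtain ⟨j, hj, rfl⟩ := Finset.mem_image.1 he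
    rw [Finset.mem_Icc] at hj
    exact Finset.mem_filter.2 ⟨hall j hj.1 hj.2, Sym2.mem_iff.2 (Or.inl rfl)⟩
  have hge : n ≤ degB G (Sum.inl 2) := by
    have := Finset.card_le_card hsup
    rwa [Finset.card_image_of_injective _ (inj_a 2), Nat.card_Icc, Nat.add_sub_cancel] at this
  have := hdeg (Sum.inl 2)
  omega


theorem bipartite_step_one' (n : ℕ) (hn : 2 ≤ n)
    (H : ℕ → Set (Finset (Sym2 BipV)))
    (hH0 : H 0 = MBip n n (n - 1))
    (hstep : ∀ i, 1 ≤ i → i ≤ n →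
      H i = H (i - 1) \
        {G ∈ H (i - 1) | G.erase s(Sum.inl 1, Sum.inr i) ∈ H (i - 1) ∧
          insert s(Sum.inl 1, Sum.inr i) G ∈ H (i - 1)}) :
    H n = {G ∈ H 0 | s(Sum.inl 1, Sum.inr 1) ∉ G ∧
      degB G (Sum.inr 1) < n - 1 ∧ degB G (Sum.inl 1) = n - 1} := by
  have key : ∀ i, i ≤ n → H i = ASet n ∪ BSet n i := by
    intro i
    induction i with
    | zero =>
      intro _
      rw [hH0, BSet_zero]
      ext G
      simp only [Set.mem_union]
      constructor
      · exact Or.inr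
      · rintro (hA | hM)
        · exact hA.1
        · exact hM
    | succ i ih =>
      intro hin
      have h1 : H (i + 1) = H i \
          {G ∈ H i | G.erase (eA (i + 1)) ∈ H i ∧ insert (eA (i + 1)) G ∈ H i} := by
        have := hstep (i + 1) (by omega) hin
        simpa [eA] using this
      rw [h1, ih (by omega)]
      have := step_eq (n := n) (i := i + 1) hn (by omega) hin
      simpa using this
  rw [key n le_rfl, BSet_n_empty hn, Set.union_empty, hH0]
  ext G
  constructor
  · rintro ⟨hM, h1, h2, h3⟩
    exact ⟨hM, h1, h2, h3⟩
  · rintro ⟨hM, h1, h2, h3⟩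
    exact ⟨hM, h1, h2, h3⟩

/-- Claim 4.1 (Step 1 for `K_{n,n}`): starting from `H_{1,0} = M_{n-1}(K_{n,n})` and
performing, for `i = 1, …, n`, the element matching using the vertex `{a_1, b_i}`, the
remaining set of critical cells is
`H_{1,n} = {G ∈ H_{1,0} : {a_1,b_1} ∉ G, deg_G(b_1) < n-1 and deg_G(a_1) = n-1}`. -/
theorem bipartite_step_one (n : ℕ) (hn : 2 ≤ n)
    (H : ℕ → Set (Finset (Sym2 BipV)))
    (hH0 : H 0 = MBip n n (n - 1))
    (hstep : ∀ i, 1 ≤ i → i ≤ n →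
      H i = H (i - 1) \
        {G ∈ H (i - 1) | G.erase s(Sum.inl 1, Sum.inr i) ∈ H (i - 1) ∧
          insert s(Sum.inl 1, Sum.inr i) G ∈ H (i - 1)}) :
    H n = {G ∈ H 0 | s(Sum.inl 1, Sum.inr 1) ∉ G ∧
      degB G (Sum.inr 1) < n - 1 ∧ degB G (Sum.inl 1) = n - 1} := by
  exact bipartite_step_one' n hn H hH0 hstep
end

section
/- Let n ≥ 3 and let G ⊆ E(K_n) be a facet of M_{n−2}(K_n), i.e., every vertex has degree at most n−2 in G and for every edge e ∈ E(K_n) ∖ G, the set G ∪ {e} has some vertex of degree greater than n−2. Then |G| ≥ C(n−1,2). -/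
lemma mem_of_mem_EK {n : ℕ} {e : Sym2 ℕ} (he : e ∈ EK n) {v : ℕ} (hv : v ∈ e) :
    v ∈ Finset.Icc 1 n := by
  induction e using Sym2.ind with
  | _ a b =>
    rw [EK, Finset.mem_filter, Finset.mk_mem_sym2_iff] at he
    rcases Sym2.mem_iff.mp hv with h | h <;> subst h
    · exact he.1.1
    · exact he.1.2

/-- Number of edges of `K_n` containing a fixed vertex `v ∈ [n]`. -/
lemma card_EK_filter {n : ℕ} {v : ℕ} (hv : v ∈ Finset.Icc 1 n) :
    ((EK n).filter (fun e => v ∈ e)).card = n - 1 := by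
  have : ((Finset.Icc 1 n).erase v).card = ((EK n).filter (fun e => v ∈ e)).card := by
    apply Finset.card_bij (fun u _ => s(v, u))
    · intro u hu
      rw [Finset.mem_erase] at hu
      rw [Finset.mem_filter, EK, Finset.mem_filter, Finset.mk_mem_sym2_iff]
      refine ⟨⟨⟨hv, hu.2⟩, ?_⟩, ?_⟩
      · rw [Sym2.mk_isDiag_iff]; exact fun h => hu.1 h.symm
      · exact Sym2.mem_mk_left v u
    · intro u1 h1 u2 h2 h
      exact Sym2.congr_right.mp h
    · intro e he
      rw [Finset.mem_filter] at he
      obtain ⟨he1, hve⟩ := he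
      induction e using Sym2.ind with
      | _ a b =>
        have hab : a ≠ b := by
          have := (Finset.mem_filter.mp he1).2
          simp only [Sym2.mk_isDiag_iff] at this
          exact this
        have haI : a ∈ Finset.Icc 1 n := mem_of_mem_EK he1 (Sym2.mem_mk_left a b)
        have hbI : b ∈ Finset.Icc 1 n := mem_of_mem_EK he1 (Sym2.mem_mk_right a b)
        rcases Sym2.mem_iff.mp hve with h | h
        · subst h
          exact ⟨b, Finset.mem_erase.mpr ⟨fun h => hab h.symm, hbI⟩, rfl⟩
        · subst h
          exact ⟨a, Finset.mem_erase.mpr ⟨hab, haI⟩, Sym2.eq_swap⟩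
  rw [← this, Finset.card_erase_of_mem hv, Nat.card_Icc]
  omega

/-- Each edge of `K_n` has exactly two endpoints in `[n]`. -/
lemma card_endpoints {n : ℕ} {e : Sym2 ℕ} (he : e ∈ EK n) :
    ((Finset.Icc 1 n).filter (fun v => v ∈ e)).card = 2 := by
  induction e using Sym2.ind with
  | _ a b =>
    have hab : a ≠ b := by
      have := (Finset.mem_filter.mp he).2
      simp only [Sym2.mk_isDiag_iff] at this
      exact this
    have haI : a ∈ Finset.Icc 1 n := mem_of_mem_EK he (Sym2.mem_mk_left a b)
    have hbI : b ∈ Finset.Icc 1 n := mem_of_mem_EK he (Sym2.mem_mk_right a b)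
    have : (Finset.Icc 1 n).filter (fun v => v ∈ s(a, b)) = {a, b} := by
      ext x
      simp only [Finset.mem_filter, Sym2.mem_iff, Finset.mem_insert, Finset.mem_singleton]
      constructor
      · exact fun h => h.2
      · rintro (rfl | rfl)
        · exact ⟨haI, Or.inl rfl⟩
        · exact ⟨hbI, Or.inr rfl⟩
    rw [this, Finset.card_pair hab]

/-- Handshake: sum of degrees equals twice the number of edges. -/
lemma handshake {n : ℕ} {H : Finset (Sym2 ℕ)} (hH : H ⊆ EK n) :
    ∑ v ∈ Finset.Icc 1 n, (H.filter (fun e => v ∈ e)).card = 2 * H.card := by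
  have : ∀ v, (H.filter (fun e => v ∈ e)).card = ∑ e ∈ H, if v ∈ e then 1 else 0 :=
    fun v => Finset.card_filter _ _
  simp only [this]
  rw [Finset.sum_comm]
  have : ∀ e ∈ H, (∑ v ∈ Finset.Icc 1 n, if v ∈ e then 1 else 0) = 2 := by
    intro e he
    rw [← Finset.card_filter]
    exact card_endpoints (hH he)
  rw [Finset.sum_congr rfl this, Finset.sum_const, smul_eq_mul, mul_comm]

/-- Every facet `G` of `M_{n-2}(K_n)` (a face that cannot be extended by any further
edge of `K_n`) has at least `C(n-1,2)` edges. -/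
theorem facet_card_lower_bound_complete (n : ℕ) (hn : 3 ≤ n)
    (G : Finset (Sym2 ℕ)) (hsub : G ⊆ EK n)
    (hdeg : ∀ v, deg G v ≤ n - 2)
    (hmax : ∀ e ∈ EK n, e ∉ G → ∃ v, n - 2 < deg (insert e G) v) :
    (n - 1).choose 2 ≤ G.card := by
  classical
  set M := EK n \ G with hM
  -- every missing edge has an endpoint with exactly one missing edge
  have key : ∀ e ∈ M, ∃ v, v ∈ Finset.Icc 1 n ∧ v ∈ e ∧
      (M.filter (fun e' => v ∈ e')).card = 1 := by
    intro e he
    rw [hM, Finset.mem_sdiff] at he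
    obtain ⟨he1, he2⟩ := he
    obtain ⟨v, hv⟩ := hmax e he1 he2
    have hve : v ∈ e := by
      by_contra h
      have : deg (insert e G) v = deg G v := by
        unfold deg
        rw [Finset.filter_insert, if_neg h]
      have := hdeg v
      omega
    have hdegv : deg (insert e G) v = deg G v + 1 := by
      unfold deg
      rw [Finset.filter_insert, if_pos hve,
        Finset.card_insert_of_notMem (fun h => he2 (Finset.mem_filter.mp h).1)]
    have hdv : deg G v = n - 2 := by
      have := hdeg v; omega
    have hvI : v ∈ Finset.Icc 1 n := mem_of_mem_EK he1 hve
    refine ⟨v, hvI, hve, ?_⟩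
    have hfe : M.filter (fun e' => v ∈ e') =
        (EK n).filter (fun e' => v ∈ e') \ G.filter (fun e' => v ∈ e') := by
      ext x
      simp only [hM, Finset.mem_sdiff, Finset.mem_filter]
      tauto
    rw [hfe, Finset.card_sdiff_of_subset (Finset.filter_subset_filter _ hsub),
      card_EK_filter hvI]
    have : (G.filter (fun e' => v ∈ e')).card = n - 2 := hdv
    omega
  set S := (Finset.Icc 1 n).filter
    (fun v => (M.filter (fun e' => v ∈ e')).card = 1) with hS
  have key' : ∀ e, ∃ v, e ∈ M → v ∈ S ∧ v ∈ e := by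
    intro e
    by_cases he : e ∈ M
    · obtain ⟨v, h1, h2, h3⟩ := key e he
      exact ⟨v, fun _ => ⟨Finset.mem_filter.mpr ⟨h1, h3⟩, h2⟩⟩
    · exact ⟨0, fun h => absurd h he⟩
  choose f hf using key'
  have hMS : M.card ≤ S.card := by
    apply Finset.card_le_card_of_injOn f (fun e he => (hf e he).1)
    intro e1 h1 e2 h2 hfe
    simp only [Finset.mem_coe] at h1 h2
    have hv1 : f e1 ∈ S := (hf e1 h1).1
    have hcard := (Finset.mem_filter.mp hv1).2
    have hle : (M.filter (fun e' => f e1 ∈ e')).card ≤ 1 := le_of_eq hcard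
    refine Finset.card_le_one.mp hle e1 ?_ e2 ?_
    · exact Finset.mem_filter.mpr ⟨h1, (hf e1 h1).2⟩
    · exact Finset.mem_filter.mpr ⟨h2, hfe ▸ (hf e2 h2).2⟩
  have hSn : S.card ≤ n := by
    calc S.card ≤ (Finset.Icc 1 n).card := Finset.card_filter_le _ _
    _ = n := by rw [Nat.card_Icc]; omega
  -- M.card ≤ n - 1
  have hMn : M.card ≤ n - 1 := by
    by_contra h
    push_neg at h
    have hMcard : M.card = n := by omega
    have hScard : S.card = n := by omega
    have hSeq : S = Finset.Icc 1 n := by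
      apply Finset.eq_of_subset_of_card_le (Finset.filter_subset _ _)
      rw [Nat.card_Icc, hScard]; omega
    have hsum : ∑ v ∈ Finset.Icc 1 n, (M.filter (fun e' => v ∈ e')).card = n := by
      have : ∀ v ∈ Finset.Icc 1 n, (M.filter (fun e' => v ∈ e')).card = 1 := by
        intro v hv
        rw [← hSeq] at hv
        exact (Finset.mem_filter.mp hv).2
      rw [Finset.sum_congr rfl this, Finset.sum_const, smul_eq_mul, mul_one,
        Nat.card_Icc]
      omega
    have := handshake (n := n) (H := M) (Finset.sdiff_subset)
    omega
  -- counting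
  have hEK : 2 * (EK n).card = n * (n - 1) := by
    have h1 := handshake (n := n) (H := EK n) (subset_refl _)
    have h2 : ∀ v ∈ Finset.Icc 1 n, ((EK n).filter (fun e => v ∈ e)).card = n - 1 :=
      fun v hv => card_EK_filter hv
    rw [Finset.sum_congr rfl h2, Finset.sum_const, smul_eq_mul, Nat.card_Icc,
      Nat.add_sub_cancel] at h1
    exact h1.symm
  have hGM : G.card + M.card = (EK n).card := by
    rw [hM, Finset.card_sdiff_of_subset hsub]
    have := Finset.card_le_card hsub
    omega
  obtain ⟨a, rfl⟩ : ∃ a, n = a + 2 := ⟨n - 2, by omega⟩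
  have ha : a + 2 - 1 = a + 1 := by omega
  have h1 : (a + 2) * (a + 2 - 1) = (a + 1) * a + 2 * (a + 1) := by
    rw [ha]; ring
  have h2 : 2 * ((a + 2 - 1).choose 2) = (a + 1) * a := by
    rw [ha, Nat.choose_two_right, Nat.add_sub_cancel, mul_comm 2]
    exact Nat.div_mul_cancel (even_iff_two_dvd.mp (by rw [mul_comm]; exact Nat.even_mul_succ_self a))
  omega
end

section
/- Let n ≥ 2 and let H ⊆ E(K_{n,n}) be a facet of M_{n−1}(K_{n,n}), i.e., every vertex has degree at most n−1 in H and for every edge e ∈ E(K_{n,n}) ∖ H, the set H ∪ {e} has some vertex of degree greater than n−1. Then |H| ≥ (n−1)². -/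
open Finset

lemma pairInj : Function.Injective (fun p : ℕ × ℕ => (s(Sum.inl p.1, Sum.inr p.2) : Sym2 BipV)) := by
  rintro ⟨a,b⟩ ⟨c,d⟩ h
  simp [Sym2.eq_iff] at h
  simp [h]

lemma sndInj (i : ℕ) : Function.Injective (fun j : ℕ => (s(Sum.inl i, Sum.inr j) : Sym2 BipV)) := by
  intro a b h
  simp [Sym2.eq_iff] at h
  exact h

lemma mem_EKbip {m n : ℕ} {e : Sym2 BipV} :
    e ∈ EKbip m n ↔ ∃ a b, a ∈ Finset.Icc 1 m ∧ b ∈ Finset.Icc 1 n ∧ e = s(Sum.inl a, Sum.inr b) := by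
  simp only [EKbip, mem_image, mem_product, Prod.exists]
  constructor
  · rintro ⟨a, b, ⟨ha, hb⟩, rfl⟩; exact ⟨a, b, ha, hb, rfl⟩
  · rintro ⟨a, b, ha, hb, rfl⟩; exact ⟨a, b, ⟨ha, hb⟩, rfl⟩


/-- Every facet `H` of `M_{n-1}(K_{n,n})` (a face that cannot be extended by any
further edge of `K_{n,n}`) has at least `(n-1)²` edges. -/
theorem facet_card_lower_bound_bipartite (n : ℕ) (hn : 2 ≤ n)
    (H : Finset (Sym2 BipV)) (hsub : H ⊆ EKbip n n)
    (hdeg : ∀ v, degB H v ≤ n - 1)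
    (hmax : ∀ e ∈ EKbip n n, e ∉ H → ∃ v, n - 1 < degB (insert e H) v) :
    (n - 1) ^ 2 ≤ H.card := by
  classical
  set S : ℕ → Finset ℕ := fun i => (Icc 1 n).filter (fun j => s(Sum.inl i, Sum.inr j) ∈ H) with hS
  set T : ℕ → Finset ℕ := fun j => (Icc 1 n).filter (fun i => s(Sum.inl i, Sum.inr j) ∈ H) with hT
  have degL : ∀ i, degB H (Sum.inl i) = (S i).card := by
    intro i
    have himg : H.filter (fun e => Sum.inl i ∈ e) = (S i).image (fun j => s(Sum.inl i, Sum.inr j)) := by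
      ext e
      simp only [mem_filter, mem_image, hS]
      constructor
      · rintro ⟨heH, hie⟩
        obtain ⟨a, b, ha, hb, rfl⟩ := mem_EKbip.mp (hsub heH)
        have hai : a = i := by
          rcases Sym2.mem_iff.mp hie with h | h
          · exact (Sum.inl.inj h).symm
          · exact absurd h (by simp)
        subst hai
        exact ⟨b, ⟨hb, heH⟩, rfl⟩
      · rintro ⟨j, ⟨hj, hjH⟩, rfl⟩
        exact ⟨hjH, by simp⟩
    rw [degB, himg, card_image_of_injective _ (sndInj i)]
  have degR : ∀ j, degB H (Sum.inr j) = (T j).card := by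
    intro j
    have himg : H.filter (fun e => Sum.inr j ∈ e) = (T j).image (fun i => s(Sum.inl i, Sum.inr j)) := by
      ext e
      simp only [mem_filter, mem_image, hT]
      constructor
      · rintro ⟨heH, hje⟩
        obtain ⟨a, b, ha, hb, rfl⟩ := mem_EKbip.mp (hsub heH)
        have hbj : b = j := by
          rcases Sym2.mem_iff.mp hje with h | h
          · exact absurd h (by simp)
          · exact (Sum.inr.inj h).symm
        subst hbj
        exact ⟨a, ⟨ha, heH⟩, rfl⟩
      · rintro ⟨i, ⟨hi, hiH⟩, rfl⟩
        exact ⟨hiH, by simp⟩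
    have hinj : Function.Injective (fun i : ℕ => (s(Sum.inl i, Sum.inr j) : Sym2 BipV)) := by
      intro a b h
      simp [Sym2.eq_iff] at h
      exact h
    rw [degB, himg, card_image_of_injective _ hinj]
  set P := ((Icc 1 n) ×ˢ (Icc 1 n)).filter (fun p => s(Sum.inl p.1, Sum.inr p.2) ∈ H) with hP
  set M := ((Icc 1 n) ×ˢ (Icc 1 n)).filter (fun p => s(Sum.inl p.1, Sum.inr p.2) ∉ H) with hM
  have hPM : P.card + M.card = n * n := by
    rw [hP, hM, card_filter_add_card_filter_not]
    simp [Nat.card_Icc]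
  have hHP : H.card = P.card := by
    rw [hP, ← card_image_of_injective _ pairInj]
    congr 1
    ext e
    simp only [mem_image, mem_filter, mem_product, Prod.exists]
    constructor
    · intro heH
      obtain ⟨a, b, ha, hb, rfl⟩ := mem_EKbip.mp (hsub heH)
      exact ⟨a, b, ⟨⟨ha, hb⟩, heH⟩, rfl⟩
    · rintro ⟨a, b, ⟨_, hin⟩, rfl⟩; exact hin
  have hPsum : P.card = ∑ i ∈ Icc 1 n, (S i).card := by
    rw [card_eq_sum_card_fiberwise (f := Prod.fst) (t := Icc 1 n)
      (fun p hp => (mem_product.mp (mem_filter.mp hp).1).1)]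
    refine sum_congr rfl fun i hi => ?_
    have : P.filter (fun p => p.1 = i) = (S i).image (fun j => (i, j)) := by
      ext p
      simp only [mem_filter, mem_image, mem_product, hS, hP]
      constructor
      · rintro ⟨⟨⟨h1, h2⟩, h3⟩, rfl⟩
        exact ⟨p.2, ⟨h2, h3⟩, rfl⟩
      · rintro ⟨j, ⟨hj, hjH⟩, rfl⟩
        exact ⟨⟨⟨hi, hj⟩, hjH⟩, rfl⟩
    rw [this, card_image_of_injective _ (fun a b h => by simpa using h)]
  have hkey : ∀ p ∈ M, (S p.1).card = n - 1 ∨ (T p.2).card = n - 1 := by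
    rintro ⟨i, j⟩ hp
    simp only [hM, mem_filter, mem_product] at hp
    obtain ⟨⟨hi, hj⟩, hnot⟩ := hp
    have he : s(Sum.inl i, Sum.inr j) ∈ EKbip n n := mem_EKbip.mpr ⟨i, j, hi, hj, rfl⟩
    obtain ⟨v, hv⟩ := hmax _ he hnot
    set e := s(Sum.inl i, Sum.inr j) with hedef
    have hins : degB (insert e H) v ≤ degB H v + 1 := by
      unfold degB
      rw [filter_insert]
      split
      · exact (card_insert_le _ _).trans (by omega)
      · omega
    have hvm : v ∈ e := by
      by_contra hvm
      have heq : degB (insert e H) v = degB H v := by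
        unfold degB; rw [filter_insert, if_neg hvm]
      have := hdeg v
      omega
    have hdv : degB H v = n - 1 := by
      have := hdeg v
      omega
    rcases Sym2.mem_iff.mp hvm with rfl | rfl
    · left; rw [← degL]; exact hdv
    · right; rw [← degR]; exact hdv
  set A := (Icc 1 n).filter (fun i => (S i).card = n - 1) with hA
  set B := (Icc 1 n).filter (fun j => (T j).card = n - 1) with hB
  set M1 := M.filter (fun p => (S p.1).card = n - 1) with hM1
  set M2 := M.filter (fun p => ¬ (S p.1).card = n - 1) with hM2
  have hM12 : M1.card + M2.card = M.card := card_filter_add_card_filter_not _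
  -- fiber bound helper : for i ∈ A, missing pairs in row i are at most 1
  have hScard : ∀ i, (S i).card ≤ n := fun i =>
    (card_filter_le _ _).trans (by simp [Nat.card_Icc])
  have hTcard : ∀ j, (T j).card ≤ n := fun j =>
    (card_filter_le _ _).trans (by simp [Nat.card_Icc])
  have hM1A : M1.card ≤ A.card := by
    rw [card_eq_sum_card_fiberwise (f := Prod.fst) (t := A) ?hmem]
    case hmem =>
      intro p hp
      rw [mem_coe] at hp ⊢
      rw [hM1, mem_filter] at hp
      obtain ⟨hpM, hps⟩ := hp
      rw [hM, mem_filter, mem_product] at hpM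
      exact mem_filter.mpr ⟨hpM.1.1, hps⟩
    calc ∑ i ∈ A, (M1.filter (fun p => p.1 = i)).card
        ≤ ∑ i ∈ A, 1 := by
          refine sum_le_sum fun i hiA => ?_
          have hiS : (S i).card = n - 1 := (mem_filter.mp hiA).2
          have hsub2 : (Icc 1 n) \ S i ⊇ (M1.filter (fun p => p.1 = i)).image Prod.snd := by
            intro j hj
            simp only [mem_image, mem_filter] at hj
            obtain ⟨p, ⟨hpM1, rfl⟩, rfl⟩ := hj
            rw [hM1, mem_filter] at hpM1
            have hpM := hpM1.1
            rw [hM, mem_filter, mem_product] at hpM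
            refine mem_sdiff.mpr ⟨hpM.1.2, ?_⟩
            rw [hS]
            simp only [mem_filter]
            tauto
          have hcim : (M1.filter (fun p => p.1 = i)).card
              = ((M1.filter (fun p => p.1 = i)).image Prod.snd).card := by
            rw [card_image_of_injOn]
            intro p hp q hq h2
            have hp1 := (mem_filter.mp hp).2
            have hq1 := (mem_filter.mp hq).2
            exact Prod.ext (hp1.trans hq1.symm) h2
          rw [hcim]
          calc ((M1.filter (fun p => p.1 = i)).image Prod.snd).card
              ≤ ((Icc 1 n) \ S i).card := card_le_card hsub2
            _ = n - (S i).card := by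
                rw [card_sdiff_of_subset (filter_subset _ _)]; simp [Nat.card_Icc]; rfl
            _ ≤ 1 := by omega
      _ = A.card := by simp
  have hM2B : M2.card ≤ B.card := by
    rw [card_eq_sum_card_fiberwise (f := Prod.snd) (t := B) ?hmem]
    case hmem =>
      intro p hp
      rw [mem_coe] at hp ⊢
      rw [hM2, mem_filter] at hp
      obtain ⟨hpM, hps⟩ := hp
      have hkey' := hkey p hpM
      have hT2 : (T p.2).card = n - 1 := by tauto
      rw [hM, mem_filter, mem_product] at hpM
      exact mem_filter.mpr ⟨hpM.1.2, hT2⟩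
    calc ∑ j ∈ B, (M2.filter (fun p => p.2 = j)).card
        ≤ ∑ j ∈ B, 1 := by
          refine sum_le_sum fun j hjB => ?_
          have hjT : (T j).card = n - 1 := (mem_filter.mp hjB).2
          have hsub2 : (Icc 1 n) \ T j ⊇ (M2.filter (fun p => p.2 = j)).image Prod.fst := by
            intro i hi
            simp only [mem_image, mem_filter] at hi
            obtain ⟨p, ⟨hpM2, rfl⟩, rfl⟩ := hi
            rw [hM2, mem_filter] at hpM2
            have hpM' := hpM2.1
            rw [hM, mem_filter, mem_product] at hpM'
            refine mem_sdiff.mpr ⟨hpM'.1.1, ?_⟩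
            rw [hT]
            simp only [mem_filter]
            tauto
          have hcim : (M2.filter (fun p => p.2 = j)).card
              = ((M2.filter (fun p => p.2 = j)).image Prod.fst).card := by
            rw [card_image_of_injOn]
            intro p hp q hq h2
            have hp1 := (mem_filter.mp hp).2
            have hq1 := (mem_filter.mp hq).2
            exact Prod.ext h2 (hp1.trans hq1.symm)
          rw [hcim]
          calc ((M2.filter (fun p => p.2 = j)).image Prod.fst).card
              ≤ ((Icc 1 n) \ T j).card := card_le_card hsub2
            _ = n - (T j).card := by
                rw [card_sdiff_of_subset (filter_subset _ _)]; simp [Nat.card_Icc]; rfl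
            _ ≤ 1 := by omega
      _ = B.card := by simp
  have hAn : A.card ≤ n := (card_filter_le _ _).trans (by simp [Nat.card_Icc])
  have hBn : B.card ≤ n := (card_filter_le _ _).trans (by simp [Nat.card_Icc])
  have hHA : A.card * (n - 1) ≤ H.card := by
    rw [hHP, hPsum]
    calc A.card * (n - 1) = ∑ i ∈ A, (n - 1) := by rw [sum_const, smul_eq_mul]
      _ = ∑ i ∈ A, (S i).card := sum_congr rfl fun i hi => ((mem_filter.mp hi).2).symm
      _ ≤ ∑ i ∈ Icc 1 n, (S i).card := sum_le_sum_of_subset (filter_subset _ _)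
  -- final arithmetic
  obtain ⟨m, rfl⟩ : ∃ m, n = m + 2 := ⟨n - 2, by omega⟩
  have h1 : (m + 1) ^ 2 = (m + 1) * (m + 1) := sq (m + 1) ▸ rfl
  have e1 : m + 2 - 1 = m + 1 := by omega
  rw [e1] at hHA ⊢
  rcases le_or_gt (m + 1) A.card with hc | hc
  · calc (m + 1) ^ 2 = (m + 1) * (m + 1) := by ring
      _ ≤ A.card * (m + 1) := Nat.mul_le_mul_right _ hc
      _ ≤ H.card := hHA
  · have hAm : A.card ≤ m := by omega
    have hMle : M.card ≤ 2 * m + 2 := by omega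
    have hHM : H.card + M.card = (m + 2) * (m + 2) := by rw [hHP]; exact hPM
    nlinarith [hHM, hMle]
end
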